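/- arXiv:2103.12968 — 8 statements merged into one kernel-verified Lean document; each statement's English description precedes it below -/
import Mathlib

section
/- Let μ ∈ ℝ, σ > 0, and let X be distributed according to the real Gaussian measure gaussianReal μ σ². Let φ ∈ (0, 1/2), b ∈ ℝ, and let c ≥ 0 satisfy (2/√π)·∫₀ᶜ exp(−t²) dt = 1 − 2φ. Then P(X < b) ≤ φ if and only if μ − b ≥ √2·σ·c. (This is the scalar form of the paper's Lemma 1: the chance constraint Pr(X < b) ≤ φ is equivalent to the deterministic linear constraint μ − b ≥ √(2σ²)·erf⁻¹(1 − 2φ).) -/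
open MeasureTheory ProbabilityTheory Real Set
open scoped ENNReal NNReal

/-- Scalar form of the paper's Lemma 1: for a Gaussian random variable `X` with mean `μ` and
variance `σ²`, and `φ ∈ (0, 1/2)`, the chance constraint `Pr(X < b) ≤ φ` is equivalent to the
deterministic constraint `μ - b ≥ √2 · σ · erf⁻¹(1 - 2φ)`, where `erf⁻¹(1 - 2φ)` is encoded by
the nonnegative real `c` satisfying `erf c = 1 - 2φ`. -/
theorem stmt0 {Ω : Type*} [MeasurableSpace Ω] (P : Measure Ω) [IsProbabilityMeasure P]
    (X : Ω → ℝ) (hXm : Measurable X) (μ σ : ℝ) (hσ : 0 < σ)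
    (hX : P.map X = gaussianReal μ ⟨σ ^ 2, sq_nonneg σ⟩)
    (φ b c : ℝ) (hφ : φ ∈ Ioo (0 : ℝ) (1 / 2)) (hc : 0 ≤ c)
    (herf : (2 / Real.sqrt π) * ∫ t in (0 : ℝ)..c, Real.exp (-t ^ 2) = 1 - 2 * φ) :
    P {ω | X ω < b} ≤ ENNReal.ofReal φ ↔ μ - b ≥ Real.sqrt 2 * σ * c := by
  set v : ℝ≥0 := ⟨σ ^ 2, sq_nonneg σ⟩ with hvdef
  have hv : v ≠ 0 := by
    intro h0
    rw [hvdef] at h0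
    have h1 : σ ^ 2 = 0 := congrArg NNReal.toReal h0
    exact pow_ne_zero 2 hσ.ne' h1
  set g : ℝ → ℝ := gaussianPDFReal μ v with hgdef
  set F : ℝ → ℝ := fun y => ∫ x in Iic y, g x with hFdef
  have hint : Integrable g := integrable_gaussianPDFReal μ v
  -- measure of Iio as ofReal (F y)
  have hPF : ∀ y : ℝ, gaussianReal μ v (Iio y) = ENNReal.ofReal (F y) := by
    intro y
    rw [gaussianReal_apply_eq_integral _ hv]
    congr 1
    exact setIntegral_congr_set Iio_ae_eq_Iic
  -- strict monotonicity
  have hFmono : StrictMono F := by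
    intro x y hxy
    have hsub : F y - F x = ∫ t in x..y, g t :=
      intervalIntegral.integral_Iic_sub_Iic hint.integrableOn hint.integrableOn
    have hpos : 0 < ∫ t in x..y, g t :=
      intervalIntegral.intervalIntegral_pos_of_pos hint.intervalIntegrable
        (fun t => gaussianPDFReal_pos μ v t hv) hxy
    linarith
  -- symmetry: F μ = 1/2
  have hmapneg : (gaussianReal μ v).map (fun x => -x) = gaussianReal (-μ) v := by
    have h := gaussianReal_map_const_mul (μ := μ) (v := v) (-1)
    simp only [neg_one_mul] at h
    rw [h]
    congr 1
    apply NNReal.coe_injective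
    rw [NNReal.coe_mul]
    norm_num
  have hsym : (gaussianReal μ v).map (fun x => 2 * μ - x) = gaussianReal μ v := by
    have hcomp : (fun x : ℝ => 2 * μ - x) = (fun y => y + 2 * μ) ∘ (fun x => -x) := by
      ext x; simp [Function.comp]; ring
    rw [hcomp, ← Measure.map_map (measurable_add_const (2 * μ)) measurable_neg, hmapneg,
      gaussianReal_map_add_const]
    congr 1
    ring
  have hIoiIio : gaussianReal μ v (Ioi μ) = gaussianReal μ v (Iio μ) := by
    conv_lhs => rw [← hsym]
    rw [Measure.map_apply (show Measurable fun x : ℝ => 2 * μ - x by fun_prop) measurableSet_Ioi]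
    congr 1
    ext x
    simp only [mem_preimage, mem_Ioi, mem_Iio]
    constructor <;> intro <;> linarith
  have hsingle : gaussianReal μ v {μ} = 0 :=
    gaussianReal_absolutelyContinuous μ hv (Real.volume_singleton)
  have hhalf : gaussianReal μ v (Iio μ) = 1 / 2 := by
    have hu : gaussianReal μ v (Iio μ) + gaussianReal μ v (Ioi μ) = 1 := by
      rw [← measure_union ((Set.Iic_disjoint_Ioi le_rfl).mono_left Set.Iio_subset_Iic_self) measurableSet_Ioi,
        Set.Iio_union_Ioi, measure_compl (measurableSet_singleton μ) (measure_ne_top _ _),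
        hsingle, measure_univ, tsub_zero]
    rw [hIoiIio, ← two_mul] at hu
    rw [ENNReal.eq_div_iff (by norm_num) (by norm_num), hu]
  have hFμ : F μ = 1 / 2 := by
    have := hPF μ
    rw [hhalf] at this
    have h2 : (1 / 2 : ℝ≥0∞) = ENNReal.ofReal (1 / 2) := by
      rw [ENNReal.ofReal_div_of_pos (by norm_num)]; norm_num
    rw [h2] at this
    exact (ENNReal.ofReal_eq_ofReal_iff
      (integral_nonneg fun x => gaussianPDFReal_nonneg μ v x) (by norm_num)).mp this.symm
  -- the key substitution
  set m : ℝ := μ - Real.sqrt 2 * σ * c with hmdef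
  have hs2 : (0:ℝ) < Real.sqrt 2 := Real.sqrt_pos.mpr (by norm_num)
  have hsπ : (0:ℝ) < Real.sqrt π := Real.sqrt_pos.mpr Real.pi_pos
  have hσs : Real.sqrt 2 * σ ≠ 0 := by positivity
  have hsqrtv : Real.sqrt (2 * π * (v:ℝ)) = Real.sqrt 2 * Real.sqrt π * σ := by
    have : (v : ℝ) = σ ^ 2 := rfl
    rw [this, Real.sqrt_mul (by positivity), Real.sqrt_mul (by norm_num),
      Real.sqrt_sq hσ.le]
  have hg_eval : ∀ t : ℝ, g (-(Real.sqrt 2 * σ) * t + μ)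
      = (Real.sqrt 2 * Real.sqrt π * σ)⁻¹ * Real.exp (-t ^ 2) := by
    intro t
    simp only [hgdef, gaussianPDFReal, hsqrtv, one_div]
    congr 1
    have hv2 : (v : ℝ) = σ ^ 2 := rfl
    have h22 : (Real.sqrt 2) ^ 2 = 2 := Real.sq_sqrt (by norm_num)
    rw [hv2]
    congr 1
    field_simp
    nlinarith [sq_nonneg t, sq_nonneg σ]
  have hkey : ∫ t in m..μ, g t = (1 - 2 * φ) / 2 := by
    have hsub := intervalIntegral.integral_comp_mul_add g
      (neg_ne_zero.mpr hσs) μ (a := 0) (b := c)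
    simp only [hg_eval, mul_zero, neg_zero, zero_add] at hsub
    have hm' : -(Real.sqrt 2 * σ) * c + μ = m := by rw [hmdef]; ring
    rw [hm', intervalIntegral.integral_const_mul, intervalIntegral.integral_symm m μ] at hsub
    rw [smul_eq_mul, inv_neg, neg_mul_neg] at hsub
    have herf' : ∫ t in (0:ℝ)..c, Real.exp (-t ^ 2) = Real.sqrt π * (1 - 2 * φ) / 2 := by
      field_simp at herf
      linarith
    rw [herf'] at hsub
    calc ∫ t in m..μ, g t
        = (Real.sqrt 2 * σ) * ((Real.sqrt 2 * σ)⁻¹ * ∫ t in m..μ, g t) := by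
          field_simp
      _ = (Real.sqrt 2 * σ) * ((Real.sqrt 2 * Real.sqrt π * σ)⁻¹
            * (Real.sqrt π * (1 - 2 * φ) / 2)) := by rw [← hsub]
      _ = (1 - 2 * φ) / 2 := by
          field_simp
  have hFm : F m = φ := by
    have h1 : F μ - F m = ∫ t in m..μ, g t :=
      intervalIntegral.integral_Iic_sub_Iic hint.integrableOn hint.integrableOn
    rw [hkey] at h1
    linarith
  -- conclude
  have hset : {ω | X ω < b} = X ⁻¹' (Iio b) := rfl
  rw [hset, ← Measure.map_apply hXm measurableSet_Iio, hX, hPF b,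
    ENNReal.ofReal_le_ofReal_iff hφ.1.le, ← hFm, hFmono.le_iff_le]
  rw [hmdef]
  constructor <;> intro h <;> [linarith; linarith]
end

section
/- Let X₁ and X₂ be independent real random variables on a probability space with laws gaussianReal μ₁ w₁ and gaussianReal μ₂ w₂ respectively, where w₁, w₂ > 0. Let A₁, A₂ ∈ ℝ be not both zero, b ∈ ℝ, φ ∈ (0, 1/2), and let c ≥ 0 satisfy (2/√π)·∫₀ᶜ exp(−t²) dt = 1 − 2φ. Then P(A₁X₁ + A₂X₂ < b) ≤ φ if and only if A₁μ₁ + A₂μ₂ − b ≥ √(2·(A₁²w₁ + A₂²w₂))·c. (This is the paper's Lemma 1 for a linear functional AᵀX of a Gaussian vector X with mean (μ₁, μ₂) and diagonal covariance diag(w₁, w₂): Pr(AᵀX < b) ≤ φ iff Aᵀμ − b ≥ √(2AᵀΣA)·erf⁻¹(1 − 2φ).) -/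
open MeasureTheory ProbabilityTheory Real Set
open scoped NNReal
open scoped ENNReal

lemma gaussianPDFReal_le (m : ℝ) (v : ℝ≥0) (t : ℝ) :
    gaussianPDFReal m v t ≤ (Real.sqrt (2 * π * v))⁻¹ := by
  unfold gaussianPDFReal
  calc (√(2 * π * v))⁻¹ * rexp (-(t - m) ^ 2 / (2 * v))
      ≤ (√(2 * π * v))⁻¹ * 1 := by
        have h1 : rexp (-(t - m) ^ 2 / (2 * v)) ≤ 1 := by
          rw [Real.exp_le_one_iff]
          apply div_nonpos_of_nonpos_of_nonneg
          · simp [sq_nonneg]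
          · positivity
        have h2 : (0:ℝ) ≤ (√(2 * π * v))⁻¹ := by positivity
        nlinarith [Real.exp_pos (-(t - m) ^ 2 / (2 * ↑v))]
    _ = _ := mul_one _

lemma conv_gaussianPDFReal (m₁ m₂ : ℝ) (v₁ v₂ : ℝ≥0) (h₁ : v₁ ≠ 0) (h₂ : v₂ ≠ 0) (x : ℝ) :
    ∫ y, gaussianPDFReal m₁ v₁ y * gaussianPDFReal m₂ v₂ (x - y)
      = gaussianPDFReal (m₁ + m₂) (v₁ + v₂) x := by
  have hv₁ : (0:ℝ) < v₁ := by positivity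
  have hv₂ : (0:ℝ) < v₂ := by positivity
  set V₁ : ℝ := (v₁ : ℝ) with hV₁
  set V₂ : ℝ := (v₂ : ℝ) with hV₂
  set s : ℝ := V₁ + V₂ with hs
  have hspos : 0 < s := by positivity
  set a : ℝ := s / (2 * V₁ * V₂) with ha
  have hapos : 0 < a := by positivity
  set y₀ : ℝ := m₁ + V₁ * (x - m₁ - m₂) / s with hy₀
  have hconst : (√(2 * π * V₁))⁻¹ * (√(2 * π * V₂))⁻¹
      = (√(2 * π * s))⁻¹ * (√(π / a))⁻¹ := by
    rw [← mul_inv, ← mul_inv]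
    congr 1
    rw [← Real.sqrt_mul (by positivity), ← Real.sqrt_mul (by positivity)]
    congr 1
    field_simp [ha]
    ring
    rw [ha]; field_simp
  have hexp : ∀ y : ℝ, -(y - m₁) ^ 2 / (2 * V₁) + -(x - y - m₂) ^ 2 / (2 * V₂)
      = -(x - (m₁ + m₂)) ^ 2 / (2 * s) + -(a * (y - y₀) ^ 2) := by
    intro y
    rw [ha, hy₀, hs]
    field_simp
    ring
  have hptw : ∀ y : ℝ, gaussianPDFReal m₁ v₁ y * gaussianPDFReal m₂ v₂ (x - y)
      = gaussianPDFReal (m₁ + m₂) (v₁ + v₂) x * ((√(π / a))⁻¹ * rexp (-(a * (y - y₀) ^ 2))) := by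
    intro y
    unfold gaussianPDFReal
    push_cast
    rw [show ((v₁ : ℝ) + (v₂ : ℝ)) = s from rfl]
    rw [mul_mul_mul_comm, hconst, ← Real.exp_add, hexp y, Real.exp_add]
    ring
  simp_rw [hptw]
  rw [integral_const_mul]
  have hint : ∫ y : ℝ, (√(π / a))⁻¹ * rexp (-(a * (y - y₀) ^ 2)) = 1 := by
    rw [integral_const_mul]
    have h1 : ∫ y : ℝ, rexp (-(a * (y - y₀) ^ 2)) = ∫ y : ℝ, rexp (-(a * y ^ 2)) := by
      exact integral_sub_right_eq_self (fun z => rexp (-(a * z ^ 2))) y₀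
    rw [h1]
    simp_rw [neg_mul_eq_neg_mul]
    rw [integral_gaussian]
    rw [inv_mul_cancel₀ (by positivity)]
  rw [hint, mul_one]

lemma integrable_conv_gauss (m₁ m₂ : ℝ) (v₁ v₂ : ℝ≥0) (x : ℝ) :
    Integrable (fun y => gaussianPDFReal m₁ v₁ y * gaussianPDFReal m₂ v₂ (x - y)) := by
  have hm : Measurable (fun y : ℝ => gaussianPDFReal m₂ v₂ (x - y)) :=
    (measurable_gaussianPDFReal m₂ v₂).comp (measurable_const.sub measurable_id)
  have h := (integrable_gaussianPDFReal m₁ v₁).bdd_mul hm.aestronglyMeasurable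
    (c := (Real.sqrt (2 * π * v₂))⁻¹) (Filter.Eventually.of_forall fun y => by
      rw [Real.norm_eq_abs, abs_of_nonneg (gaussianPDFReal_nonneg _ _ _)]
      exact gaussianPDFReal_le _ _ _)
  simpa [mul_comm] using h

lemma conv_gaussianPDF (m₁ m₂ : ℝ) (v₁ v₂ : ℝ≥0) (h₁ : v₁ ≠ 0) (h₂ : v₂ ≠ 0) (x : ℝ) :
    ∫⁻ y, gaussianPDF m₁ v₁ y * gaussianPDF m₂ v₂ (x - y)
      = gaussianPDF (m₁ + m₂) (v₁ + v₂) x := by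
  unfold gaussianPDF
  simp_rw [← ENNReal.ofReal_mul (gaussianPDFReal_nonneg m₁ v₁ _)]
  rw [← ofReal_integral_eq_lintegral_ofReal (integrable_conv_gauss m₁ m₂ v₁ v₂ x)
    (Filter.Eventually.of_forall fun y =>
      mul_nonneg (gaussianPDFReal_nonneg _ _ _) (gaussianPDFReal_nonneg _ _ _)),
    conv_gaussianPDFReal m₁ m₂ v₁ v₂ h₁ h₂ x]

lemma gauss_conv_map (m₁ m₂ : ℝ) (v₁ v₂ : ℝ≥0) (h₁ : v₁ ≠ 0) (h₂ : v₂ ≠ 0) :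
    Measure.map (fun p : ℝ × ℝ => p.1 + p.2)
      ((gaussianReal m₁ v₁).prod (gaussianReal m₂ v₂)) = gaussianReal (m₁ + m₂) (v₁ + v₂) := by
  have hadd : Measurable (fun p : ℝ × ℝ => p.1 + p.2) := measurable_add
  haveI : IsProbabilityMeasure (Measure.map (fun p : ℝ × ℝ => p.1 + p.2)
      ((gaussianReal m₁ v₁).prod (gaussianReal m₂ v₂))) :=
    Measure.isProbabilityMeasure_map hadd.aemeasurable
  refine Measure.ext_of_Iic _ _ (fun b => ?_)
  set g : ℝ → ℝ≥0∞ := (Iic b).indicator 1 with hg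
  have hgmeas : Measurable g := measurable_one.indicator measurableSet_Iic
  have hgind : ∀ (f : ℝ → ℝ≥0∞) (y : ℝ), (Iic b).indicator f y = f y * g y := by
    intro f y
    by_cases h : y ∈ Iic b <;> simp [hg, Set.indicator, h]
  -- RHS
  have hRHS : gaussianReal (m₁ + m₂) (v₁ + v₂) (Iic b)
      = ∫⁻ y, gaussianPDF (m₁ + m₂) (v₁ + v₂) y * g y := by
    rw [gaussianReal_of_var_ne_zero _ (by simp [h₁]), withDensity_apply _ measurableSet_Iic,
      ← lintegral_indicator measurableSet_Iic _]
    exact lintegral_congr fun y => hgind _ y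
  rw [hRHS, Measure.map_apply hadd measurableSet_Iic]
  have hpre : (gaussianReal m₁ v₁).prod (gaussianReal m₂ v₂)
        ((fun p : ℝ × ℝ => p.1 + p.2) ⁻¹' Iic b)
      = ∫⁻ p : ℝ × ℝ, g (p.1 + p.2) ∂((gaussianReal m₁ v₁).prod (gaussianReal m₂ v₂)) := by
    rw [← lintegral_indicator_one (hadd measurableSet_Iic)]
    refine lintegral_congr fun p => ?_
    by_cases h : p.1 + p.2 ≤ b <;> simp [hg, Set.indicator, h, mem_Iic]
  rw [hpre]
  rw [lintegral_prod (fun p : ℝ × ℝ => g (p.1 + p.2)) ((hgmeas.comp hadd).aemeasurable)]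
  -- inner integral over second gaussian
  have hinner : ∀ x : ℝ, (∫⁻ y, g (x + y) ∂(gaussianReal m₂ v₂))
      = ∫⁻ y, gaussianPDF m₂ v₂ (y - x) * g y := by
    intro x
    rw [gaussianReal_of_var_ne_zero _ h₂,
      lintegral_withDensity_eq_lintegral_mul _ (measurable_gaussianPDF _ _)
        (show Measurable (fun y : ℝ => g (x + y)) from
          hgmeas.comp (measurable_const.add measurable_id))]
    have := (measurePreserving_add_right (volume : Measure ℝ) x).lintegral_comp
      (f := fun y => gaussianPDF m₂ v₂ (y - x) * g y)
      (((measurable_gaussianPDF m₂ v₂).comp (measurable_id.sub measurable_const)).mul hgmeas)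
    simp only [add_sub_cancel_right] at this
    rw [← this]
    refine lintegral_congr fun y => ?_
    simp [Pi.mul_apply, add_comm]
  simp_rw [hinner]
  rw [gaussianReal_of_var_ne_zero _ h₁,
    lintegral_withDensity_eq_lintegral_mul _ (measurable_gaussianPDF _ _)
      (Measurable.lintegral_prod_right'
        (show Measurable (fun p : ℝ × ℝ => gaussianPDF m₂ v₂ (p.2 - p.1) * g p.2) from
          ((measurable_gaussianPDF m₂ v₂).comp (measurable_snd.sub measurable_fst)).mul
            (hgmeas.comp measurable_snd)))]
  simp only [Pi.mul_apply]
  have hpull : ∀ x : ℝ, gaussianPDF m₁ v₁ x * ∫⁻ y, gaussianPDF m₂ v₂ (y - x) * g y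
      = ∫⁻ y, gaussianPDF m₁ v₁ x * (gaussianPDF m₂ v₂ (y - x) * g y) :=
    fun x => (lintegral_const_mul' _ _ ENNReal.ofReal_ne_top).symm
  simp_rw [hpull]
  rw [lintegral_lintegral_swap]
  · refine lintegral_congr fun y => ?_
    have : ∀ x : ℝ, gaussianPDF m₁ v₁ x * (gaussianPDF m₂ v₂ (y - x) * g y)
        = (gaussianPDF m₁ v₁ x * gaussianPDF m₂ v₂ (y - x)) * g y := fun x => by ring
    simp_rw [this]
    rw [lintegral_mul_const' _ _ (by by_cases h : y ∈ Iic b <;> simp [hg, Set.indicator, h]),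
      conv_gaussianPDF m₁ m₂ v₁ v₂ h₁ h₂ y]
  · exact (((measurable_gaussianPDF m₁ v₁).comp measurable_fst).mul
      (((measurable_gaussianPDF m₂ v₂).comp (measurable_snd.sub measurable_fst)).mul
        (hgmeas.comp measurable_snd))).aemeasurable

lemma exp_sq_integrable : Integrable (fun t : ℝ => rexp (-t ^ 2)) := by
  simpa using integrable_exp_neg_mul_sq (one_pos)

lemma exp_sq_Ioi_c (c φ : ℝ) (hc : 0 ≤ c)
    (herf : (2 / Real.sqrt π) * ∫ t in (0 : ℝ)..c, Real.exp (-t ^ 2) = 1 - 2 * φ) :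
    ∫ t in Ioi c, rexp (-t ^ 2) = Real.sqrt π * φ := by
  have hsq : (0:ℝ) < Real.sqrt π := Real.sqrt_pos.mpr pi_pos
  have h0c : ∫ t in Ioc (0:ℝ) c, rexp (-t ^ 2) = Real.sqrt π * (1 - 2 * φ) / 2 := by
    rw [← intervalIntegral.integral_of_le hc]
    field_simp at herf ⊢
    linarith [herf]
  have hunion : Ioc (0:ℝ) c ∪ Ioi c = Ioi 0 := Ioc_union_Ioi_eq_Ioi hc
  have hIoi0 : ∫ t in Ioi (0:ℝ), rexp (-t ^ 2) = Real.sqrt π / 2 := by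
    have := integral_gaussian_Ioi 1
    simpa using this
  have hsplit : ∫ t in Ioi (0:ℝ), rexp (-t ^ 2)
      = (∫ t in Ioc (0:ℝ) c, rexp (-t ^ 2)) + ∫ t in Ioi c, rexp (-t ^ 2) := by
    rw [← hunion]
    exact setIntegral_union (Ioc_disjoint_Ioi le_rfl) measurableSet_Ioi
      exp_sq_integrable.integrableOn exp_sq_integrable.integrableOn
  rw [hIoi0, h0c] at hsplit
  linarith [hsplit]

lemma gauss_Iio_val (m : ℝ) (v : ℝ≥0) (hv : v ≠ 0) (c φ : ℝ) (hc : 0 ≤ c)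
    (herf : (2 / Real.sqrt π) * ∫ t in (0 : ℝ)..c, Real.exp (-t ^ 2) = 1 - 2 * φ) :
    gaussianReal m v (Iio (m - Real.sqrt (2 * v) * c)) = ENNReal.ofReal φ := by
  have hvpos : (0:ℝ) < v := by positivity
  set σ : ℝ := Real.sqrt (2 * v) with hσ
  have hσpos : 0 < σ := Real.sqrt_pos.mpr (by positivity)
  have hσsq : σ ^ 2 = 2 * v := Real.sq_sqrt (by positivity)
  rw [gaussianReal_apply_eq_integral m hv _]
  congr 1
  set h : ℝ → ℝ := (Iio (m - σ * c)).indicator (gaussianPDFReal m v) with hh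
  have e1 : ∫ x in Iio (m - σ * c), gaussianPDFReal m v x = ∫ x, h x :=
    (integral_indicator measurableSet_Iio).symm
  have e2 : ∫ x, h x = ∫ x, h (x + m) := (integral_add_right_eq_self h m).symm
  have e3 : ∫ x : ℝ, h (σ * x + m) = |σ⁻¹| • ∫ x, h (x + m) :=
    Measure.integral_comp_mul_left (fun x => h (x + m)) σ
  have e4 : ∀ t : ℝ, h (σ * t + m)
      = (Iio (-c)).indicator (fun t => (Real.sqrt (2 * π * v))⁻¹ * rexp (-t ^ 2)) t := by
    intro t
    have hmem : σ * t + m ∈ Iio (m - σ * c) ↔ t ∈ Iio (-c) := by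
      simp only [mem_Iio]
      constructor
      · intro ht; nlinarith
      · intro ht; nlinarith
    by_cases ht : t ∈ Iio (-c)
    · rw [hh, Set.indicator_of_mem (hmem.mpr ht), Set.indicator_of_mem ht]
      unfold gaussianPDFReal
      congr 1
      rw [add_sub_cancel_right]
      congr 1
      rw [mul_pow, hσsq]
      field_simp
    · rw [hh, Set.indicator_of_notMem (fun hmm => ht (hmem.mp hmm)), Set.indicator_of_notMem ht]
  have e5 : ∫ t : ℝ, (Iio (-c)).indicator (fun t => (Real.sqrt (2 * π * v))⁻¹ * rexp (-t ^ 2)) t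
      = (Real.sqrt (2 * π * v))⁻¹ * ∫ t in Iio (-c), rexp (-t ^ 2) := by
    rw [integral_indicator measurableSet_Iio, integral_const_mul]
  have e6 : ∫ t in Iio (-c), rexp (-t ^ 2) = ∫ t in Ioi c, rexp (-t ^ 2) := by
    rw [← integral_Iic_eq_integral_Iio, ← integral_comp_neg_Ioi]
    simp
  have e7 := exp_sq_Ioi_c c φ hc herf
  -- combine
  have hσinv : |σ⁻¹| = σ⁻¹ := abs_of_pos (by positivity)
  have e8 : ∫ x, h (x + m) = σ * ∫ x : ℝ, h (σ * x + m) := by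
    rw [e3, hσinv, smul_eq_mul, ← mul_assoc, mul_inv_cancel₀ (ne_of_gt hσpos), one_mul]
  rw [e1, e2, e8]
  simp_rw [e4]
  rw [e5, e6, e7]
  have hconst : σ * ((Real.sqrt (2 * π * v))⁻¹ * (Real.sqrt π * φ)) = φ := by
    have : Real.sqrt (2 * π * v) = Real.sqrt π * σ := by
      rw [hσ, ← Real.sqrt_mul (le_of_lt pi_pos)]
      congr 1; ring
    rw [this]
    have hπ : (0:ℝ) < Real.sqrt π := Real.sqrt_pos.mpr pi_pos
    field_simp
  rw [hconst]

lemma gauss_Iio_le_iff (m : ℝ) (v : ℝ≥0) (hv : v ≠ 0) (b b₀ φ : ℝ)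
    (hval : gaussianReal m v (Iio b₀) = ENNReal.ofReal φ) :
    gaussianReal m v (Iio b) ≤ ENNReal.ofReal φ ↔ b ≤ b₀ := by
  constructor
  · intro hle
    by_contra hb
    push_neg at hb
    have hpos : 0 < gaussianReal m v (Ico b₀ b) := by
      rw [gaussianReal_apply_eq_integral m hv]
      apply ENNReal.ofReal_pos.mpr
      rw [setIntegral_pos_iff_support_of_nonneg_ae
        (Filter.Eventually.of_forall fun x => gaussianPDFReal_nonneg m v x)
        (integrable_gaussianPDFReal m v).integrableOn]
      have hsupp : Function.support (gaussianPDFReal m v) = univ :=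
        Set.eq_univ_of_forall fun x => ne_of_gt (gaussianPDFReal_pos m v x hv)
      rw [hsupp, Set.univ_inter, Real.volume_Ico]
      simp [hb]
    have hsplit : gaussianReal m v (Iio b)
        = gaussianReal m v (Iio b₀) + gaussianReal m v (Ico b₀ b) := by
      rw [← measure_union (by
        refine Set.disjoint_left.mpr fun x hx hx' => ?_
        exact absurd hx'.1 (not_le.mpr hx)) measurableSet_Ico,
        Iio_union_Ico_eq_Iio (le_of_lt hb)]
    rw [hsplit, hval] at hle
    exact absurd hle (not_le.mpr (ENNReal.lt_add_right ENNReal.ofReal_ne_top (ne_of_gt hpos)))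
  · intro hb
    calc gaussianReal m v (Iio b) ≤ gaussianReal m v (Iio b₀) :=
          measure_mono (Iio_subset_Iio hb)
      _ = ENNReal.ofReal φ := hval

lemma gauss_law_sum {Ω : Type*} [MeasurableSpace Ω] (P : Measure Ω) [IsProbabilityMeasure P]
    (X₁ X₂ : Ω → ℝ) (hX₁m : Measurable X₁) (hX₂m : Measurable X₂)
    (hindep : IndepFun X₁ X₂ P)
    (μ₁ μ₂ : ℝ) (w₁ w₂ : ℝ≥0) (hw₁ : 0 < w₁) (hw₂ : 0 < w₂)
    (hX₁ : P.map X₁ = gaussianReal μ₁ w₁) (hX₂ : P.map X₂ = gaussianReal μ₂ w₂)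
    (A₁ A₂ : ℝ) (hA : ¬(A₁ = 0 ∧ A₂ = 0)) :
    P.map (fun ω => A₁ * X₁ ω + A₂ * X₂ ω)
      = gaussianReal (A₁ * μ₁ + A₂ * μ₂) (⟨A₁ ^ 2, sq_nonneg _⟩ * w₁ + ⟨A₂ ^ 2, sq_nonneg _⟩ * w₂) := by
  have h1 : P.map (fun ω => A₁ * X₁ ω) = gaussianReal (A₁ * μ₁) (⟨A₁ ^ 2, sq_nonneg _⟩ * w₁) := by
    rw [show (fun ω => A₁ * X₁ ω) = (A₁ * ·) ∘ X₁ from rfl,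
      ← Measure.map_map (measurable_const_mul A₁) hX₁m, hX₁, gaussianReal_map_const_mul]
    rfl
  have h2 : P.map (fun ω => A₂ * X₂ ω) = gaussianReal (A₂ * μ₂) (⟨A₂ ^ 2, sq_nonneg _⟩ * w₂) := by
    rw [show (fun ω => A₂ * X₂ ω) = (A₂ * ·) ∘ X₂ from rfl,
      ← Measure.map_map (measurable_const_mul A₂) hX₂m, hX₂, gaussianReal_map_const_mul]
    rfl
  by_cases hA₁ : A₁ = 0
  · have hA₂ : A₂ ≠ 0 := fun h => hA ⟨hA₁, h⟩
    subst hA₁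
    have : (⟨(0:ℝ) ^ 2, sq_nonneg _⟩ * w₁ : ℝ≥0) = 0 := by
      apply mul_eq_zero.mpr; left; ext; simp; rfl
    rw [this, zero_add]
    simpa using h2
  by_cases hA₂ : A₂ = 0
  · subst hA₂
    have : (⟨(0:ℝ) ^ 2, sq_nonneg _⟩ * w₂ : ℝ≥0) = 0 := by
      apply mul_eq_zero.mpr; left; ext; simp; rfl
    rw [this, add_zero]
    simpa using h1
  -- both nonzero
  have hv₁ : (⟨A₁ ^ 2, sq_nonneg _⟩ * w₁ : ℝ≥0) ≠ 0 := by
    intro h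
    rcases mul_eq_zero.mp h with h | h
    · exact hA₁ (by have h' : A₁ ^ 2 = 0 := congrArg NNReal.toReal h; exact (pow_eq_zero_iff two_ne_zero).mp h')
    · exact (ne_of_gt hw₁) h
  have hv₂ : (⟨A₂ ^ 2, sq_nonneg _⟩ * w₂ : ℝ≥0) ≠ 0 := by
    intro h
    rcases mul_eq_zero.mp h with h | h
    · exact hA₂ (by have h' : A₂ ^ 2 = 0 := congrArg NNReal.toReal h; exact (pow_eq_zero_iff two_ne_zero).mp h')
    · exact (ne_of_gt hw₂) h
  have hY₁m : Measurable (fun ω => A₁ * X₁ ω) := hX₁m.const_mul A₁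
  have hY₂m : Measurable (fun ω => A₂ * X₂ ω) := hX₂m.const_mul A₂
  have hi : IndepFun (fun ω => A₁ * X₁ ω) (fun ω => A₂ * X₂ ω) P :=
    hindep.comp (measurable_const_mul A₁) (measurable_const_mul A₂)
  have hpair : P.map (fun ω => (A₁ * X₁ ω, A₂ * X₂ ω))
      = (gaussianReal (A₁ * μ₁) (⟨A₁ ^ 2, sq_nonneg _⟩ * w₁)).prod
          (gaussianReal (A₂ * μ₂) (⟨A₂ ^ 2, sq_nonneg _⟩ * w₂)) := by
    rw [← h1, ← h2]
    exact (indepFun_iff_map_prod_eq_prod_map_map hY₁m.aemeasurable hY₂m.aemeasurable).mp hi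
  calc P.map (fun ω => A₁ * X₁ ω + A₂ * X₂ ω)
      = (P.map (fun ω => (A₁ * X₁ ω, A₂ * X₂ ω))).map (fun p : ℝ × ℝ => p.1 + p.2) := by
        rw [Measure.map_map measurable_add (hY₁m.prodMk hY₂m)]
        rfl
    _ = gaussianReal (A₁ * μ₁ + A₂ * μ₂) (⟨A₁ ^ 2, sq_nonneg _⟩ * w₁ + ⟨A₂ ^ 2, sq_nonneg _⟩ * w₂) := by
        rw [hpair, gauss_conv_map _ _ _ _ hv₁ hv₂]

/-- The paper's Lemma 1 for a linear functional `AᵀX` of a Gaussian vector `X` with mean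
`(μ₁, μ₂)` and diagonal covariance `diag(w₁, w₂)`: for `φ ∈ (0, 1/2)`,
`Pr(AᵀX < b) ≤ φ` iff `Aᵀμ - b ≥ √(2 AᵀΣA) · erf⁻¹(1 - 2φ)`, where `erf⁻¹(1 - 2φ)` is encoded
by the nonnegative real `c` with `erf c = 1 - 2φ`. -/
theorem stmt1 {Ω : Type*} [MeasurableSpace Ω] (P : Measure Ω) [IsProbabilityMeasure P]
    (X₁ X₂ : Ω → ℝ) (hX₁m : Measurable X₁) (hX₂m : Measurable X₂)
    (hindep : IndepFun X₁ X₂ P)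
    (μ₁ μ₂ : ℝ) (w₁ w₂ : ℝ≥0) (hw₁ : 0 < w₁) (hw₂ : 0 < w₂)
    (hX₁ : P.map X₁ = gaussianReal μ₁ w₁) (hX₂ : P.map X₂ = gaussianReal μ₂ w₂)
    (A₁ A₂ : ℝ) (hA : ¬(A₁ = 0 ∧ A₂ = 0)) (b φ c : ℝ)
    (hφ : φ ∈ Ioo (0 : ℝ) (1 / 2)) (hc : 0 ≤ c)
    (herf : (2 / Real.sqrt π) * ∫ t in (0 : ℝ)..c, Real.exp (-t ^ 2) = 1 - 2 * φ) :
    P {ω | A₁ * X₁ ω + A₂ * X₂ ω < b} ≤ ENNReal.ofReal φ ↔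
      A₁ * μ₁ + A₂ * μ₂ - b ≥ Real.sqrt (2 * (A₁ ^ 2 * w₁ + A₂ ^ 2 * w₂)) * c := by
  set V : ℝ≥0 := ⟨A₁ ^ 2, sq_nonneg _⟩ * w₁ + ⟨A₂ ^ 2, sq_nonneg _⟩ * w₂ with hV
  have hcoe : (V : ℝ) = A₁ ^ 2 * w₁ + A₂ ^ 2 * w₂ := by
    rw [hV]; push_cast; rfl
  have hVpos : (0:ℝ) < V := by
    rw [hcoe]
    rcases not_and_or.mp hA with h | h
    · have : A₁ ≠ 0 := h
      have h1 : (0:ℝ) < A₁ ^ 2 * w₁ := by positivity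
      have h2 : (0:ℝ) ≤ A₂ ^ 2 * w₂ := by positivity
      linarith
    · have : A₂ ≠ 0 := h
      have h1 : (0:ℝ) < A₂ ^ 2 * w₂ := by positivity
      have h2 : (0:ℝ) ≤ A₁ ^ 2 * w₁ := by positivity
      linarith
  have hVne : V ≠ 0 := by
    intro h
    rw [h] at hVpos
    simp at hVpos
  have hlaw := gauss_law_sum P X₁ X₂ hX₁m hX₂m hindep μ₁ μ₂ w₁ w₂ hw₁ hw₂ hX₁ hX₂ A₁ A₂ hA
  have hYm : Measurable (fun ω => A₁ * X₁ ω + A₂ * X₂ ω) :=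
    (hX₁m.const_mul A₁).add (hX₂m.const_mul A₂)
  have hset : P {ω | A₁ * X₁ ω + A₂ * X₂ ω < b}
      = gaussianReal (A₁ * μ₁ + A₂ * μ₂) V (Iio b) := by
    rw [← hlaw, Measure.map_apply hYm measurableSet_Iio]
    rfl
  rw [hset]
  rw [gauss_Iio_le_iff _ _ hVne b (A₁ * μ₁ + A₂ * μ₂ - Real.sqrt (2 * V) * c) φ
    (gauss_Iio_val _ V hVne c φ hc herf)]
  rw [ge_iff_le, hcoe]
  constructor <;> intro h <;> linarith
end

section
/- Let V be a real inner product space, p_i, p_j ∈ V, r > 0, d = ‖p_j − p_i‖ with d > r, and let v ∈ V be nonzero. Then there exists λ ≥ 0 with ‖(p_i + λ·v) − p_j‖ ≤ r if and only if the (unoriented) angle between v and p_j − p_i is at most arcsin(r/d). (The collision cone of relative velocities is exactly the cone of directions within angle α of p_ij, where sin α = r/‖p_ij‖.) -/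
set_option maxHeartbeats 800000


open Real

/-- The collision cone is the cone of directions within angle `α = arcsin(r/d)` of `p_j - p_i`:
the ray from `p_i` with direction `v` meets the closed ball of radius `r` around `p_j` iff the
unoriented angle between `v` and `p_j - p_i` is at most `arcsin (r / d)`, where
`d = ‖p_j - p_i‖ > r`. -/
theorem stmt7 {V : Type*} [NormedAddCommGroup V] [InnerProductSpace ℝ V]
    (p_i p_j : V) (r : ℝ) (hr : 0 < r) (d : ℝ) (hd : d = ‖p_j - p_i‖) (hdr : r < d)
    (v : V) (hv : v ≠ 0) :
    (∃ l : ℝ, 0 ≤ l ∧ ‖(p_i + l • v) - p_j‖ ≤ r) ↔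
      InnerProductGeometry.angle v (p_j - p_i) ≤ Real.arcsin (r / d) := by
  set w : V := p_j - p_i with hw
  have hd0 : 0 < d := lt_trans hr hdr
  have hwn : ‖w‖ = d := hd.symm
  have ha : 0 < ‖v‖ := norm_pos_iff.mpr hv
  set a := ‖v‖ with hadef
  set c := (inner ℝ v w : ℝ) with hcdef
  set θ := InnerProductGeometry.angle v w with hθdef
  clear_value w a c θ
  have hcos : Real.cos θ = c / (a * d) := by
    rw [hθdef, InnerProductGeometry.cos_angle, hwn, hcdef, hadef]
  have hθ0 : 0 ≤ θ := hθdef ▸ InnerProductGeometry.angle_nonneg v w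
  have hθpi : θ ≤ π := hθdef ▸ InnerProductGeometry.angle_le_pi v w
  have hsin0 : 0 ≤ Real.sin θ := Real.sin_nonneg_of_nonneg_of_le_pi hθ0 hθpi
  have hpyth := Real.sin_sq_add_cos_sq θ
  have hsinsq : Real.sin θ ^ 2 * (a ^ 2 * d ^ 2) = a ^ 2 * d ^ 2 - c ^ 2 := by
    have hcad : Real.cos θ * (a * d) = c := by
      rw [hcos, div_mul_cancel₀ _ (mul_pos ha hd0).ne']
    have hc2 : c ^ 2 = Real.cos θ ^ 2 * (a ^ 2 * d ^ 2) := by rw [← hcad]; ring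
    linear_combination (a ^ 2 * d ^ 2) * hpyth + hc2
  have hnorm : ∀ l : ℝ, ‖(p_i + l • v) - p_j‖ ^ 2 = l ^ 2 * a ^ 2 - 2 * l * c + d ^ 2 := by
    intro l
    have h1 : (p_i + l • v) - p_j = l • v - w := by rw [hw]; abel
    rw [h1, @norm_sub_sq_real V _ _, real_inner_smul_left, norm_smul]
    rw [hwn]
    simp only [Real.norm_eq_abs, mul_pow, sq_abs, ← hcdef, ← hadef]
    ring
  have hrd1 : r / d < 1 := (div_lt_one hd0).mpr hdr
  have hrd0 : 0 < r / d := div_pos hr hd0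
  constructor
  · rintro ⟨l, hl0, hle⟩
    have hsq : l ^ 2 * a ^ 2 - 2 * l * c + d ^ 2 ≤ r ^ 2 := by
      rw [← hnorm l]
      exact pow_le_pow_left₀ (norm_nonneg _) hle 2
    have hlpos : 0 < l := by
      rcases hl0.lt_or_eq with h | h
      · exact h
      · exfalso; rw [← h] at hsq; nlinarith
    have hcpos : 0 < c := by nlinarith [sq_nonneg l, sq_nonneg (l * a)]
    have hkey : d ^ 2 * a ^ 2 - c ^ 2 ≤ r ^ 2 * a ^ 2 := by
      nlinarith [sq_nonneg (l * a ^ 2 - c)]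
    have hsinle : Real.sin θ ≤ r / d := by
      have h1 : Real.sin θ ^ 2 * (a ^ 2 * d ^ 2) ≤ r ^ 2 * a ^ 2 := by linarith [hsinsq]
      have ha2 : 0 < a ^ 2 := by positivity
      have h2 : (Real.sin θ * d) ^ 2 ≤ r ^ 2 := by nlinarith [h1, ha2]
      have h3 : Real.sin θ * d ≤ r := by
        nlinarith [h2, mul_nonneg hsin0 hd0.le, hr.le]
      rw [le_div_iff₀ hd0]; exact h3
    have hcospos : 0 < Real.cos θ := by
      rw [hcos]; positivity
    have hθlt : θ ≤ π / 2 := by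
      by_contra h
      push_neg at h
      have := Real.cos_nonpos_of_pi_div_two_le_of_le h.le (by linarith [Real.pi_pos])
      linarith
    calc θ = Real.arcsin (Real.sin θ) := (Real.arcsin_sin (by linarith [Real.pi_pos]) hθlt).symm
      _ ≤ Real.arcsin (r / d) := Real.monotone_arcsin hsinle
  · intro hθle
    have harc_lt : Real.arcsin (r / d) < π / 2 := Real.arcsin_lt_pi_div_two.mpr hrd1
    have hθlt : θ < π / 2 := lt_of_le_of_lt hθle harc_lt
    have hcospos : 0 < Real.cos θ :=
      Real.cos_pos_of_mem_Ioo ⟨by linarith [Real.pi_pos], hθlt⟩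
    have hcpos : 0 < c := by
      have h := mul_pos hcospos (mul_pos ha hd0)
      have : Real.cos θ * (a * d) = c := by rw [hcos, div_mul_cancel₀ _ (mul_pos ha hd0).ne']
      linarith
    have hsinle : Real.sin θ ≤ r / d := by
      have h1 : Real.sin θ ≤ Real.sin (Real.arcsin (r / d)) := by
        apply Real.strictMonoOn_sin.monotoneOn
        · exact ⟨by linarith [Real.pi_pos], hθlt.le⟩
        · exact ⟨Real.neg_pi_div_two_le_arcsin _, Real.arcsin_le_pi_div_two _⟩
        · exact hθle
      rwa [Real.sin_arcsin (by linarith) hrd1.le] at h1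
    refine ⟨c / a ^ 2, le_of_lt (by positivity), ?_⟩
    have hn : ‖(p_i + (c / a ^ 2) • v) - p_j‖ ^ 2 = d ^ 2 - c ^ 2 / a ^ 2 := by
      rw [hnorm]; field_simp; ring
    have hle2 : d ^ 2 - c ^ 2 / a ^ 2 ≤ r ^ 2 := by
      have h1 : Real.sin θ * d ≤ r := by
        rw [le_div_iff₀ hd0] at hsinle; exact hsinle
      have h2 : (Real.sin θ * d) ^ 2 ≤ r ^ 2 := by
        nlinarith [mul_nonneg hsin0 hd0.le]
      have h3 : Real.sin θ ^ 2 * d ^ 2 = d ^ 2 - c ^ 2 / a ^ 2 := by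
        field_simp
        nlinarith [hsinsq]
      nlinarith
    nlinarith [norm_nonneg ((p_i + (c / a ^ 2) • v) - p_j), hn]
end

section
/- Let V be a real inner product space, p_i, p_j ∈ V, r > 0, d = ‖p_j − p_i‖ with d > r, and let v ∈ V be nonzero. Set p = p_j − p_i. Then there exists λ ≥ 0 with ‖(p_i + λ·v) − p_j‖ ≤ r if and only if ⟪v, p⟫ ≥ 0 and ⟪v, p⟫² ≥ ‖v‖²·(d² − r²). (Algebraic characterization of membership in the collision cone C_ij.) -/
open Real

/-- Algebraic characterization of membership in the collision cone: the ray from `p_i` with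
direction `v` meets the closed ball of radius `r` around `p_j` iff `⟪v, p⟫ ≥ 0` and
`⟪v, p⟫² ≥ ‖v‖² (d² - r²)`, where `p = p_j - p_i` and `d = ‖p‖ > r`. -/
theorem stmt9 {V : Type*} [NormedAddCommGroup V] [InnerProductSpace ℝ V]
    (p_i p_j : V) (r : ℝ) (hr : 0 < r) (d : ℝ) (hd : d = ‖p_j - p_i‖) (hdr : r < d)
    (v : V) (hv : v ≠ 0) (p : V) (hp : p = p_j - p_i) :
    (∃ l : ℝ, 0 ≤ l ∧ ‖(p_i + l • v) - p_j‖ ≤ r) ↔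
      (inner ℝ v p : ℝ) ≥ 0 ∧ (inner ℝ v p : ℝ) ^ 2 ≥ ‖v‖ ^ 2 * (d ^ 2 - r ^ 2) := by
  set a : ℝ := ‖v‖ ^ 2 with ha
  set b : ℝ := (inner ℝ v p : ℝ) with hb
  have hvn : 0 < ‖v‖ := norm_pos_iff.mpr hv
  have hapos : 0 < a := by positivity
  have hd0 : 0 < d := lt_trans hr hdr
  have hdr2 : 0 < d ^ 2 - r ^ 2 := by nlinarith
  have hnorm : ∀ l : ℝ, ‖(p_i + l • v) - p_j‖ ^ 2 = a * l ^ 2 - 2 * b * l + d ^ 2 := by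
    intro l
    have : (p_i + l • v) - p_j = l • v - p := by rw [hp]; abel
    rw [this, @norm_sub_sq_real, inner_smul_left, norm_smul]
    have hdp : ‖p‖ = d := by rw [hp, hd]
    simp [← hb, hdp, mul_pow]
    ring
  have key : ∀ l : ℝ, (‖(p_i + l • v) - p_j‖ ≤ r ↔ a * l ^ 2 - 2 * b * l + d ^ 2 ≤ r ^ 2) := by
    intro l
    rw [← hnorm l, ← pow_le_pow_iff_left₀ (norm_nonneg _) hr.le two_ne_zero]
  constructor
  · rintro ⟨l, hl, hle⟩
    rw [key l] at hle
    have hb0 : 0 < b := by nlinarith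
    constructor
    · exact le_of_lt hb0
    · nlinarith [sq_nonneg (a * l - b)]
  · rintro ⟨hb0, hdisc⟩
    refine ⟨b / a, div_nonneg hb0 hapos.le, ?_⟩
    rw [key]
    have : a * (b / a) ^ 2 - 2 * b * (b / a) + d ^ 2 = d ^ 2 - b ^ 2 / a := by
      field_simp; ring
    rw [this]
    have h2 : d ^ 2 - r ^ 2 ≤ b ^ 2 / a := (le_div_iff₀ hapos).mpr (by linarith)
    linarith
end

section
/- Work in the Euclidean plane E = EuclideanSpace ℝ (Fin 2) with its standard orientation o. Let p_i, p_j ∈ E, r > 0, d = ‖p_j − p_i‖ with d > r, α = arcsin(r/d), and let T = o.rotation α applied to p_j − p_i (and likewise for rotation by −α). Then the infimum of ‖(p_i + λ·T) − p_j‖ over λ ≥ 0 equals r, i.e., the ray from p_i in the direction of the rotated vector T is tangent to the closed ball of radius r around p_j. (The two boundary rays of the collision cone, obtained by rotating p_ij by ±α with sin α = r/‖p_ij‖, are exactly the tangent lines to the inflated obstacle.) -/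
open Real Set

noncomputable section

instance : Fact (Module.finrank ℝ (EuclideanSpace ℝ (Fin 2)) = 2) :=
  ⟨finrank_euclideanSpace_fin⟩

/-- The standard orientation of the Euclidean plane. -/
def stdOrientation : Orientation ℝ (EuclideanSpace ℝ (Fin 2)) (Fin 2) :=
  (EuclideanSpace.basisFun (Fin 2) ℝ).toBasis.orientation

/-- The two boundary rays of the collision cone, obtained by rotating `p_j - p_i` by `±α` with
`α = arcsin (r/d)`, are tangent to the inflated obstacle: the infimum of the distance from the
ray from `p_i` in the rotated direction to the center `p_j` equals `r`. -/
theorem stmt10 (p_i p_j : EuclideanSpace ℝ (Fin 2)) (r : ℝ) (hr : 0 < r)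
    (d : ℝ) (hd : d = ‖p_j - p_i‖) (hdr : r < d) (α : ℝ) (hα : α = Real.arcsin (r / d))
    (T : EuclideanSpace ℝ (Fin 2))
    (hT : T = stdOrientation.rotation (α : Real.Angle) (p_j - p_i) ∨
      T = stdOrientation.rotation ((-α : ℝ) : Real.Angle) (p_j - p_i)) :
    sInf ((fun l : ℝ => ‖(p_i + l • T) - p_j‖) '' Ici (0 : ℝ)) = r := by
  set o := stdOrientation
  set v : EuclideanSpace ℝ (Fin 2) := p_j - p_i with hv
  have hd0 : 0 < d := lt_trans hr hdr
  -- sin and cos of α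
  have hs_mem : r / d ∈ Set.Icc (-1 : ℝ) 1 := by
    constructor
    · have : (0:ℝ) ≤ r / d := by positivity
      linarith
    · rw [div_le_one hd0]; exact hdr.le
  have hsin : Real.sin α = r / d := by
    rw [hα, Real.sin_arcsin hs_mem.1 hs_mem.2]
  set c := Real.cos α with hc
  have hcs : c ^ 2 + (r / d) ^ 2 = 1 := by
    rw [← hsin, hc]; rw [add_comm]; exact Real.sin_sq_add_cos_sq α
  have hc0 : 0 ≤ c := by
    rw [hc, hα]; exact Real.cos_arcsin_nonneg _
  -- express T
  obtain ⟨s', hs'sq, hTeq⟩ : ∃ s' : ℝ, s' ^ 2 = (r / d) ^ 2 ∧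
      T = c • v + s' • (o.rightAngleRotation v) := by
    rcases hT with h | h
    · exact ⟨r / d, rfl, by rw [h, o.rotation_apply]; simp [Real.Angle.cos_coe,
        Real.Angle.sin_coe, hsin, hc]⟩
    · refine ⟨-(r / d), by ring, ?_⟩
      rw [h, o.rotation_apply]
      simp [Real.Angle.cos_coe, Real.Angle.sin_coe, hsin, hc]
  -- norm computation
  have hnorm : ∀ a b : ℝ, ‖a • v + b • (o.rightAngleRotation v)‖ ^ 2
      = (a ^ 2 + b ^ 2) * d ^ 2 := by
    intro a b
    rw [← real_inner_self_eq_norm_sq]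
    have h2 : ‖o.rightAngleRotation v‖ = ‖v‖ := (o.rightAngleRotation).norm_map v
    simp only [inner_add_add_self, inner_smul_left, inner_smul_right, conj_trivial,
      o.inner_rightAngleRotation_right, o.inner_rightAngleRotation_left, map_smul,
      LinearMap.smul_apply, o.areaForm_apply_self, real_inner_self_eq_norm_sq,
      o.areaForm_rightAngleRotation_left, inner_neg_neg,
      smul_eq_mul, mul_zero, neg_zero, neg_neg, add_zero, h2, ← hd]
    ring
  -- the distance function squared
  have hkey : ∀ l : ℝ, ‖(p_i + l • T) - p_j‖ ^ 2 = r ^ 2 + d ^ 2 * (l - c) ^ 2 := by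
    intro l
    have hpt : (p_i + l • T) - p_j = (l * c - 1) • v + (l * s') • (o.rightAngleRotation v) := by
      rw [hTeq]
      have : (p_i + l • (c • v + s' • o.rightAngleRotation v)) - p_j
          = l • (c • v + s' • o.rightAngleRotation v) - v := by
        rw [hv]; abel
      rw [this, smul_add, smul_smul, smul_smul, sub_smul, one_smul]
      abel
    rw [hpt, hnorm]
    have hr2 : s' ^ 2 * d ^ 2 = r ^ 2 := by
      rw [hs'sq, div_pow, div_mul_cancel₀]
      positivity
    have hcs' : c ^ 2 + s' ^ 2 = 1 := by rw [hs'sq]; exact hcs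
    linear_combination (l ^ 2 - 1) * d ^ 2 * hcs' + hr2
  -- conclude
  have hne : ((fun l : ℝ => ‖(p_i + l • T) - p_j‖) '' Ici (0 : ℝ)).Nonempty :=
    ⟨_, ⟨0, mem_Ici.mpr le_rfl, rfl⟩⟩
  have hlb : ∀ x ∈ (fun l : ℝ => ‖(p_i + l • T) - p_j‖) '' Ici (0 : ℝ), r ≤ x := by
    rintro x ⟨l, -, rfl⟩
    have h1 := hkey l
    have h2 : 0 ≤ ‖(p_i + l • T) - p_j‖ := norm_nonneg _
    nlinarith [sq_nonneg (l - c), sq_nonneg d]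
  apply le_antisymm
  · apply csInf_le ⟨r, hlb⟩
    refine ⟨c, mem_Ici.mpr hc0, ?_⟩
    have h1 := hkey c
    have h2 : 0 ≤ ‖(p_i + c • T) - p_j‖ := norm_nonneg _
    simp only [sub_self] at h1
    nlinarith
  · exact le_csInf hne hlb

end
end

section
/- Work in the Euclidean plane E = EuclideanSpace ℝ (Fin 2) with its standard orientation o. Let p ∈ E be nonzero, 0 < r < ‖p‖, α = arcsin(r/‖p‖), and define the outer normals N₁ = o.rotation (−(α + π/2)) p and N₂ = o.rotation (α + π/2) p. Then for every nonzero v ∈ E: (⟪v, N₁⟫ ≤ 0 and ⟪v, N₂⟫ ≤ 0) if and only if the unoriented angle between v and p is at most α. Equivalently, v lies outside the collision cone (angle strictly greater than α) if and only if ⟪v, N₁⟫ > 0 or ⟪v, N₂⟫ > 0. -/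
open Real

noncomputable section

lemma key_sin_iff (α t : ℝ) (hα0 : 0 < α) (hαπ : α < π / 2) (ht1 : -π < t) (ht2 : t ≤ π) :
    (Real.sin (t - α) ≤ 0 ∧ 0 ≤ Real.sin (t + α)) ↔ |t| ≤ α := by
  constructor
  · rintro ⟨h1, h2⟩
    rw [abs_le]
    by_contra h
    push_neg at h
    rcases lt_or_ge t (-α) with hlt | hge
    · have hpos : 0 < Real.sin (-(t + α)) :=
        Real.sin_pos_of_pos_of_lt_pi (by linarith) (by linarith)
      rw [Real.sin_neg] at hpos
      linarith
    · have hgt : α < t := h (by linarith)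
      have hpos : 0 < Real.sin (t - α) :=
        Real.sin_pos_of_pos_of_lt_pi (by linarith) (by linarith)
      linarith
  · intro h
    rw [abs_le] at h
    obtain ⟨h1, h2⟩ := h
    constructor
    · exact Real.sin_nonpos_of_nonpos_of_neg_pi_le (by linarith) (by linarith)
    · exact Real.sin_nonneg_of_nonneg_of_le_pi (by linarith) (by linarith)

/-- With outer normals `N₁ = rotation (-(α + π/2)) p` and `N₂ = rotation (α + π/2) p` of the
collision cone with axis `p` and half-opening angle `α = arcsin (r/‖p‖)`, a nonzero `v` satisfies
`⟪v, N₁⟫ ≤ 0 ∧ ⟪v, N₂⟫ ≤ 0` iff the unoriented angle between `v` and `p` is at most `α`. -/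
theorem stmt11 (p : EuclideanSpace ℝ (Fin 2)) (hp : p ≠ 0) (r : ℝ) (hr : 0 < r)
    (hrp : r < ‖p‖) (α : ℝ) (hα : α = Real.arcsin (r / ‖p‖))
    (N₁ N₂ : EuclideanSpace ℝ (Fin 2))
    (hN₁ : N₁ = stdOrientation.rotation ((-(α + π / 2) : ℝ) : Real.Angle) p)
    (hN₂ : N₂ = stdOrientation.rotation ((α + π / 2 : ℝ) : Real.Angle) p)
    (v : EuclideanSpace ℝ (Fin 2)) (hv : v ≠ 0) :
    ((inner ℝ v N₁ : ℝ) ≤ 0 ∧ (inner ℝ v N₂ : ℝ) ≤ 0) ↔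
      InnerProductGeometry.angle v p ≤ α := by
  set o := stdOrientation
  have hp0 : (0:ℝ) < ‖p‖ := norm_pos_iff.mpr hp
  have hα0 : 0 < α := by
    rw [hα]
    exact Real.arcsin_pos.mpr (div_pos hr hp0)
  have hαπ : α < π / 2 := by
    rw [hα]
    exact Real.arcsin_lt_pi_div_two.mpr ((div_lt_one hp0).mpr hrp)
  set t := (o.oangle v p).toReal with htdef
  have hθ : o.oangle v p = (t : Real.Angle) := (Real.Angle.coe_toReal _).symm
  have ht1 : -π < t := Real.Angle.neg_pi_lt_toReal _
  have ht2 : t ≤ π := Real.Angle.toReal_le_pi _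
  have hangle : InnerProductGeometry.angle v p = |t| :=
    o.angle_eq_abs_oangle_toReal hv hp
  have hc : (0:ℝ) < ‖v‖ * ‖p‖ := mul_pos (norm_pos_iff.mpr hv) hp0
  have h1 : (inner ℝ v N₁ : ℝ) = ‖v‖ * ‖p‖ * Real.sin (t - α) := by
    rw [hN₁, o.inner_eq_norm_mul_norm_mul_cos_oangle, LinearIsometryEquiv.norm_map,
      o.oangle_rotation_right hv hp, hθ, ← Real.Angle.coe_add, Real.Angle.cos_coe,
      show t + -(α + π / 2) = (t - α) - π / 2 by ring, Real.cos_sub_pi_div_two]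
  have h2 : (inner ℝ v N₂ : ℝ) = -(‖v‖ * ‖p‖ * Real.sin (t + α)) := by
    rw [hN₂, o.inner_eq_norm_mul_norm_mul_cos_oangle, LinearIsometryEquiv.norm_map,
      o.oangle_rotation_right hv hp, hθ, ← Real.Angle.coe_add, Real.Angle.cos_coe,
      show t + (α + π / 2) = (t + α) + π / 2 by ring, Real.cos_add_pi_div_two]
    ring
  rw [h1, h2, hangle, ← key_sin_iff α t hα0 hαπ ht1 ht2]
  constructor
  · rintro ⟨ha, hb⟩
    constructor
    · nlinarith
    · nlinarith
  · rintro ⟨ha, hb⟩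
    constructor
    · nlinarith
    · nlinarith

end
end

section
/- Work in the Euclidean plane E = EuclideanSpace ℝ (Fin 2) with its standard orientation o. Let p ∈ E be nonzero, 0 < α < π/2, and define the tangent directions T₁ = o.rotation (−α) p and T₂ = o.rotation α p. Then for every nonzero v ∈ E, the unoriented angle between v and p is at most α if and only if there exist c ≥ 0 and d ≥ 0 with v = c·T₁ + d·T₂. (The collision cone equals the conical hull of its two boundary directions T₁, T₂.) -/
open Real
open InnerProductSpace

noncomputable section

set_option maxHeartbeats 1000000 in
/-- The collision cone with axis `p` and half-opening angle `α ∈ (0, π/2)` equals the conical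
hull of its two boundary directions `T₁ = rotation (-α) p` and `T₂ = rotation α p`: a nonzero `v`
makes unoriented angle at most `α` with `p` iff `v = c • T₁ + d • T₂` with `c, d ≥ 0`. -/
theorem stmt12 (p : EuclideanSpace ℝ (Fin 2)) (hp : p ≠ 0) (α : ℝ)
    (hα0 : 0 < α) (hα : α < π / 2)
    (T₁ T₂ : EuclideanSpace ℝ (Fin 2))
    (hT₁ : T₁ = stdOrientation.rotation ((-α : ℝ) : Real.Angle) p)
    (hT₂ : T₂ = stdOrientation.rotation ((α : ℝ) : Real.Angle) p)
    (v : EuclideanSpace ℝ (Fin 2)) (hv : v ≠ 0) :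
    InnerProductGeometry.angle v p ≤ α ↔
      ∃ c : ℝ, 0 ≤ c ∧ ∃ d : ℝ, 0 ≤ d ∧ v = c • T₁ + d • T₂ := by
  set o := stdOrientation with ho
  set q := o.rightAngleRotation p with hqdef
  have hpn : (0:ℝ) < ‖p‖ := norm_pos_iff.mpr hp
  have hvn : (0:ℝ) < ‖v‖ := norm_pos_iff.mpr hv
  have hca : (0:ℝ) < Real.cos α := Real.cos_pos_of_mem_Ioo ⟨by linarith [Real.pi_pos], hα⟩
  have hsa : (0:ℝ) < Real.sin α := Real.sin_pos_of_pos_of_lt_pi hα0 (by linarith [Real.pi_pos])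
  have hpq : ⟪p, q⟫_ℝ = 0 := by
    rw [hqdef, Orientation.inner_rightAngleRotation_right]
    simp
  have hqp : ⟪q, p⟫_ℝ = 0 := by rw [real_inner_comm]; exact hpq
  have hqq : ⟪q, q⟫_ℝ = ‖p‖ ^ 2 := by
    rw [real_inner_self_eq_norm_sq, hqdef, o.rightAngleRotation.norm_map p]
  have hpp : ⟪p, p⟫_ℝ = ‖p‖ ^ 2 := real_inner_self_eq_norm_sq p
  have hT₁' : T₁ = Real.cos α • p - Real.sin α • q := by
    rw [hT₁, Orientation.rotation_apply]
    simp [Real.Angle.cos_coe, Real.Angle.sin_coe, sub_eq_add_neg, neg_smul]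
    rfl
  have hT₂' : T₂ = Real.cos α • p + Real.sin α • q := by
    rw [hT₂, Orientation.rotation_apply]
    simp [Real.Angle.cos_coe, Real.Angle.sin_coe]
    rfl
  obtain ⟨a, b, hab⟩ : ∃ a b : ℝ, v = a • p + b • q := by
    refine ⟨(o.basisRightAngleRotation p hp).repr v 0,
      (o.basisRightAngleRotation p hp).repr v 1, ?_⟩
    conv_lhs => rw [← (o.basisRightAngleRotation p hp).sum_repr v]
    simp [Fin.sum_univ_succ, Orientation.coe_basisRightAngleRotation, hqdef]
  have hvp : ⟪v, p⟫_ℝ = a * ‖p‖ ^ 2 := by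
    rw [hab]
    simp only [inner_add_left, real_inner_smul_left, hpp, hqp, mul_zero, add_zero]
  have hvsq : ‖v‖ ^ 2 = (a ^ 2 + b ^ 2) * ‖p‖ ^ 2 := by
    rw [← real_inner_self_eq_norm_sq, hab]
    simp only [inner_add_left, inner_add_right, real_inner_smul_left, real_inner_smul_right,
      hpp, hqq, hpq, hqp]
    ring
  have hcos : Real.cos (InnerProductGeometry.angle v p) = a * ‖p‖ / ‖v‖ := by
    rw [InnerProductGeometry.cos_angle, hvp]
    field_simp
  have hangle_iff : InnerProductGeometry.angle v p ≤ α ↔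
      Real.cos α * ‖v‖ ≤ a * ‖p‖ := by
    have h1 : InnerProductGeometry.angle v p ≤ π := InnerProductGeometry.angle_le_pi v p
    have h0 : 0 ≤ InnerProductGeometry.angle v p := InnerProductGeometry.angle_nonneg v p
    constructor
    · intro h
      have := Real.cos_le_cos_of_nonneg_of_le_pi h0 (le_of_lt (lt_of_lt_of_le hα
        (by linarith [Real.pi_pos]))) h
      rw [hcos] at this
      calc Real.cos α * ‖v‖ ≤ (a * ‖p‖ / ‖v‖) * ‖v‖ := by
            exact mul_le_mul_of_nonneg_right this hvn.le
        _ = a * ‖p‖ := by field_simp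
    · intro h
      by_contra hcon
      push_neg at hcon
      have hmem₁ : α ∈ Set.Icc 0 π := ⟨hα0.le, by linarith [Real.pi_pos]⟩
      have hmem₂ : InnerProductGeometry.angle v p ∈ Set.Icc 0 π := ⟨h0, h1⟩
      have := Real.strictAntiOn_cos hmem₁ hmem₂ hcon
      rw [hcos] at this
      have : a * ‖p‖ / ‖v‖ < Real.cos α := this
      have h2 : a * ‖p‖ < Real.cos α * ‖v‖ := by
        have := (div_lt_iff₀ hvn).mp this
        linarith
      linarith
  rw [hangle_iff]
  constructor
  · intro h
    have ha0 : 0 ≤ a := by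
      have h' : 0 ≤ a * ‖p‖ := le_trans (by positivity) h
      by_contra hcon
      push_neg at hcon
      nlinarith
    have hkey : |b| * Real.cos α ≤ a * Real.sin α := by
      have h2 : (Real.cos α * ‖v‖) ^ 2 ≤ (a * ‖p‖) ^ 2 := by
        have hl : 0 ≤ Real.cos α * ‖v‖ := by positivity
        nlinarith
      have hpyth : Real.sin α ^ 2 + Real.cos α ^ 2 = 1 := Real.sin_sq_add_cos_sq α
      have h3 : Real.cos α ^ 2 * (a ^ 2 + b ^ 2) ≤ a ^ 2 := by
        have h3' : Real.cos α ^ 2 * (a ^ 2 + b ^ 2) * ‖p‖ ^ 2 ≤ a ^ 2 * ‖p‖ ^ 2 := by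
          calc Real.cos α ^ 2 * (a ^ 2 + b ^ 2) * ‖p‖ ^ 2
              = (Real.cos α * ‖v‖) ^ 2 := by rw [mul_pow, hvsq]; ring
            _ ≤ (a * ‖p‖) ^ 2 := h2
            _ = a ^ 2 * ‖p‖ ^ 2 := by ring
        have hp2 : (0:ℝ) < ‖p‖ ^ 2 := by positivity
        exact le_of_mul_le_mul_right h3' hp2
      have h4 : (|b| * Real.cos α) ^ 2 ≤ (a * Real.sin α) ^ 2 := by
        have hb2 : (|b| * Real.cos α) ^ 2 = b ^ 2 * Real.cos α ^ 2 := by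
          rw [mul_pow, sq_abs]
        rw [hb2]
        nlinarith [h3, sq_nonneg a]
      nlinarith [h4, mul_nonneg ha0 hsa.le, mul_nonneg (abs_nonneg b) hca.le]
    refine ⟨(a / Real.cos α - b / Real.sin α) / 2, ?_, (a / Real.cos α + b / Real.sin α) / 2,
      ?_, ?_⟩
    · have hb : b * Real.cos α ≤ a * Real.sin α := le_trans
        (mul_le_mul_of_nonneg_right (le_abs_self b) hca.le) hkey
      have : b / Real.sin α ≤ a / Real.cos α := by
        rw [div_le_div_iff₀ hsa hca]; linarith
      linarith
    · have hb : -b * Real.cos α ≤ a * Real.sin α := le_trans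
        (mul_le_mul_of_nonneg_right (neg_le_abs b) hca.le) hkey
      have : -(b / Real.sin α) ≤ a / Real.cos α := by
        rw [← neg_div, div_le_div_iff₀ hsa hca]; linarith
      linarith
    · rw [hab, hT₁', hT₂']
      have hca' : Real.cos α ≠ 0 := hca.ne'
      have hsa' : Real.sin α ≠ 0 := hsa.ne'
      match_scalars <;> field_simp <;> ring
  · rintro ⟨c, hc, d, hd, hvcd⟩
    have e : a • p + b • q = ((c + d) * Real.cos α) • p + ((d - c) * Real.sin α) • q := by
      rw [← hab, hvcd, hT₁', hT₂']
      module
    have e1 : a = (c + d) * Real.cos α := by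
      have := congrArg (fun w : EuclideanSpace ℝ (Fin 2) => ⟪w, p⟫_ℝ) e
      simp only [inner_add_left, real_inner_smul_left, hpp, hqp, mul_zero, add_zero] at this
      exact mul_right_cancel₀ (by positivity) this
    have e2 : b = (d - c) * Real.sin α := by
      have := congrArg (fun w : EuclideanSpace ℝ (Fin 2) => ⟪w, q⟫_ℝ) e
      simp only [inner_add_left, real_inner_smul_left, hqq, hpq, mul_zero, zero_add] at this
      exact mul_right_cancel₀ (by positivity) this
    have hvle : ‖v‖ ≤ (c + d) * ‖p‖ := by
      have hsq : ‖v‖ ^ 2 ≤ ((c + d) * ‖p‖) ^ 2 := by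
        rw [hvsq, e1, e2]
        have hpyth : Real.sin α ^ 2 + Real.cos α ^ 2 = 1 := Real.sin_sq_add_cos_sq α
        nlinarith [mul_nonneg hc hd, sq_nonneg ‖p‖, sq_nonneg (Real.sin α),
          mul_nonneg (mul_nonneg hc hd) (sq_nonneg (Real.sin α))]
      nlinarith [mul_nonneg (add_nonneg hc hd) hpn.le]
    rw [e1]
    calc Real.cos α * ‖v‖ ≤ Real.cos α * ((c + d) * ‖p‖) :=
          mul_le_mul_of_nonneg_left hvle hca.le
      _ = (c + d) * Real.cos α * ‖p‖ := by ring
end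
end

section
/- Work in the Euclidean plane E = EuclideanSpace ℝ (Fin 2) with its standard orientation o. Let two disks have centers p_i, p_j ∈ E and radii r_i, r_j ≥ 0, set r = r_i + r_j, and assume d = ‖p_j − p_i‖ > r; let α = arcsin(r/d) and N = o.rotation (−(α + π/2)) (p_j − p_i). Let the second disk move with a fixed velocity v_j ∈ E, and let the first disk's velocity be random: v_i(ω) = (v̂₁ + ω₁, v̂₂ + ω₂), where ω₁, ω₂ are independent real random variables with laws gaussianReal 0 w₁ and gaussianReal 0 w₂, w₁, w₂ > 0. Let φ ∈ (0, 1/2) and c ≥ 0 satisfy (2/√π)·∫₀ᶜ exp(−t²) dt = 1 − 2φ. If the deterministic constraint ⟪N, (v̂₁, v̂₂)⟫ − ⟪N, v_j⟫ ≥ √(2·(N₁²·w₁ + N₂²·w₂))·c holds (where N = (N₁, N₂)), then the probability that the disks ever collide, P(∃ t ≥ 0, dist(p_i + t·v_i, p_j + t·v_j) ≤ r), is at most φ. (The transformed deterministic chance constraint of the paper guarantees the collision probability stays below the threshold.) -/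
open MeasureTheory ProbabilityTheory Real
open scoped NNReal

noncomputable section

lemma pdf_prod_eq (v₁ v₂ : ℝ≥0) (hv₁ : v₁ ≠ 0) (hv₂ : v₂ ≠ 0) (y x : ℝ) :
    gaussianPDFReal 0 v₁ x * gaussianPDFReal y v₂ x
      = ((√(2 * π * v₁))⁻¹ * (√(2 * π * v₂))⁻¹ * rexp (-y ^ 2 / (2 * ((v₁:ℝ) + v₂)))) *
        rexp (-(((v₁:ℝ) + v₂) / (2 * v₁ * v₂)) * (x - (v₁:ℝ) * y / ((v₁:ℝ) + v₂)) ^ 2) := by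
  have ha : (0:ℝ) < v₁ := by positivity
  have hb : (0:ℝ) < v₂ := by positivity
  have hab : (0:ℝ) < (v₁:ℝ) + v₂ := by linarith
  simp only [gaussianPDFReal, sub_zero]
  rw [mul_mul_mul_comm, ← Real.exp_add]
  have h : -x ^ 2 / (2 * (v₁:ℝ)) + -(x - y) ^ 2 / (2 * (v₂:ℝ))
      = -y ^ 2 / (2 * ((v₁:ℝ) + v₂)) +
        -(((v₁:ℝ) + v₂) / (2 * v₁ * v₂)) * (x - (v₁:ℝ) * y / ((v₁:ℝ) + v₂)) ^ 2 := by
    field_simp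
    ring
  rw [h, Real.exp_add]
  ring

lemma integral_pdf_prod (v₁ v₂ : ℝ≥0) (hv₁ : v₁ ≠ 0) (hv₂ : v₂ ≠ 0) (y : ℝ) :
    ∫ x, gaussianPDFReal 0 v₁ x * gaussianPDFReal y v₂ x = gaussianPDFReal 0 (v₁ + v₂) y := by
  have ha : (0:ℝ) < v₁ := by positivity
  have hb : (0:ℝ) < v₂ := by positivity
  have hab : (0:ℝ) < (v₁:ℝ) + v₂ := by linarith
  have hk : (0:ℝ) < ((v₁:ℝ) + v₂) / (2 * v₁ * v₂) := by positivity
  calc ∫ x, gaussianPDFReal 0 v₁ x * gaussianPDFReal y v₂ x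
      = ∫ x, ((√(2 * π * v₁))⁻¹ * (√(2 * π * v₂))⁻¹ * rexp (-y ^ 2 / (2 * ((v₁:ℝ) + v₂)))) *
          rexp (-(((v₁:ℝ) + v₂) / (2 * v₁ * v₂)) * (x - (v₁:ℝ) * y / ((v₁:ℝ) + v₂)) ^ 2) := by
        simp_rw [pdf_prod_eq v₁ v₂ hv₁ hv₂ y]
    _ = ((√(2 * π * v₁))⁻¹ * (√(2 * π * v₂))⁻¹ * rexp (-y ^ 2 / (2 * ((v₁:ℝ) + v₂)))) *
          ∫ x, rexp (-(((v₁:ℝ) + v₂) / (2 * v₁ * v₂)) * (x - (v₁:ℝ) * y / ((v₁:ℝ) + v₂)) ^ 2) :=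
        integral_const_mul _ _
    _ = ((√(2 * π * v₁))⁻¹ * (√(2 * π * v₂))⁻¹ * rexp (-y ^ 2 / (2 * ((v₁:ℝ) + v₂)))) *
          √(π / (((v₁:ℝ) + v₂) / (2 * v₁ * v₂))) := by
        rw [integral_sub_right_eq_self
          (fun x => rexp (-(((v₁:ℝ) + v₂) / (2 * v₁ * v₂)) * x ^ 2)) ((v₁:ℝ) * y / ((v₁:ℝ) + v₂)),
          integral_gaussian]
    _ = gaussianPDFReal 0 (v₁ + v₂) y := by
        rw [gaussianPDFReal]
        rw [show π / (((v₁:ℝ) + v₂) / (2 * v₁ * v₂)) = (2*π*v₁) * (2*π*v₂) / (2*π*((v₁:ℝ)+v₂)) by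
          field_simp]
        push_cast
        rw [sub_zero, Real.sqrt_div (by positivity),
          Real.sqrt_mul (show (0:ℝ) ≤ 2*π*(v₁:ℝ) by positivity),
          Real.sqrt_mul (show (0:ℝ) ≤ 2*π by positivity) (v₁:ℝ),
          Real.sqrt_mul (show (0:ℝ) ≤ 2*π by positivity) (v₂:ℝ),
          Real.sqrt_mul (show (0:ℝ) ≤ 2*π by positivity) ((v₁:ℝ)+v₂)]
        have s1 : √(2*π) ≠ 0 := by positivity
        have s2 : √(v₁:ℝ) ≠ 0 := by positivity
        have s3 : √(v₂:ℝ) ≠ 0 := by positivity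
        have s4 : √((v₁:ℝ)+v₂) ≠ 0 := by positivity
        field_simp

lemma integrable_pdf_prod (v₁ v₂ : ℝ≥0) (hv₁ : v₁ ≠ 0) (hv₂ : v₂ ≠ 0) (y : ℝ) :
    Integrable (fun x => gaussianPDFReal 0 v₁ x * gaussianPDFReal y v₂ x) := by
  have hk : (0:ℝ) < ((v₁:ℝ) + v₂) / (2 * v₁ * v₂) := by
    have ha : (0:ℝ) < v₁ := by positivity
    have hb : (0:ℝ) < v₂ := by positivity
    positivity
  have := ((integrable_exp_neg_mul_sq hk).comp_sub_right
      ((v₁:ℝ) * y / ((v₁:ℝ) + v₂))).const_mul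
      ((√(2 * π * v₁))⁻¹ * (√(2 * π * v₂))⁻¹ * rexp (-y ^ 2 / (2 * ((v₁:ℝ) + v₂))))
  refine this.congr (ae_of_all _ fun x => ?_)
  exact (pdf_prod_eq v₁ v₂ hv₁ hv₂ y x).symm

lemma map_add_prod_gaussian (v₁ v₂ : ℝ≥0) :
    ((gaussianReal 0 v₁).prod (gaussianReal 0 v₂)).map (fun p : ℝ × ℝ => p.1 + p.2)
      = gaussianReal 0 (v₁ + v₂) := by
  by_cases hv₁ : v₁ = 0
  · subst hv₁
    rw [gaussianReal_zero_var, Measure.dirac_prod,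
      Measure.map_map (by fun_prop) (by fun_prop)]
    rw [show ((fun p : ℝ × ℝ => p.1 + p.2) ∘ Prod.mk (0:ℝ)) = (fun y : ℝ => 0 + y) from rfl]
    have := gaussianReal_map_const_add (μ := (0:ℝ)) (v := v₂) 0
    rw [add_zero] at this
    rw [zero_add]
    exact this
  by_cases hv₂ : v₂ = 0
  · subst hv₂
    rw [gaussianReal_zero_var, Measure.prod_dirac,
      Measure.map_map (by fun_prop) (by fun_prop)]
    rw [show ((fun p : ℝ × ℝ => p.1 + p.2) ∘ (fun x : ℝ => (x, (0:ℝ)))) = (fun x : ℝ => x + 0)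
      from rfl]
    have := gaussianReal_map_add_const (μ := (0:ℝ)) (v := v₁) 0
    rw [add_zero] at this
    rw [add_zero]
    exact this
  have hv : v₁ + v₂ ≠ 0 := by positivity
  ext s hs
  rw [Measure.map_apply (by fun_prop) hs,
    Measure.prod_apply (measurable_add hs)]
  have h1 : ∀ x : ℝ, (gaussianReal 0 v₂) (Prod.mk x ⁻¹' ((fun p : ℝ × ℝ => p.1 + p.2) ⁻¹' s))
      = ∫⁻ y in s, gaussianPDF x v₂ y := by
    intro x
    have : Prod.mk x ⁻¹' ((fun p : ℝ × ℝ => p.1 + p.2) ⁻¹' s) = (fun y => x + y) ⁻¹' s := rfl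
    rw [this, ← Measure.map_apply (by fun_prop) hs, gaussianReal_map_const_add x, zero_add,
      gaussianReal_apply x hv₂ s]
  simp_rw [h1]
  have hm2 : Measurable (Function.uncurry fun x y => gaussianPDF x v₂ y) := by
    unfold Function.uncurry gaussianPDF gaussianPDFReal
    fun_prop
  have hmg : Measurable (fun x => ∫⁻ y in s, gaussianPDF x v₂ y) :=
    hm2.lintegral_prod_right' (ν := volume.restrict s)
  rw [gaussianReal_of_var_ne_zero 0 hv₁,
    lintegral_withDensity_eq_lintegral_mul _ (measurable_gaussianPDF 0 v₁) hmg]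
  simp only [Pi.mul_apply]
  have h3 : ∀ x, gaussianPDF 0 v₁ x * ∫⁻ y in s, gaussianPDF x v₂ y
      = ∫⁻ y in s, gaussianPDF 0 v₁ x * gaussianPDF x v₂ y :=
    fun x => (lintegral_const_mul _ (measurable_gaussianPDF x v₂)).symm
  have hswap : ∫⁻ x, gaussianPDF 0 v₁ x * ∫⁻ y in s, gaussianPDF x v₂ y
      = ∫⁻ y in s, ∫⁻ x, gaussianPDF 0 v₁ x * gaussianPDF x v₂ y := by
    simp_rw [h3]
    exact lintegral_lintegral_swap (by
      apply Measurable.aemeasurable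
      exact ((measurable_gaussianPDF 0 v₁).comp measurable_fst).mul
        (hm2.comp (measurable_fst.prodMk measurable_snd)))
  rw [hswap]
  have h2 : ∀ y : ℝ, ∫⁻ x, gaussianPDF 0 v₁ x * gaussianPDF x v₂ y
      = gaussianPDF 0 (v₁ + v₂) y := by
    intro y
    have hsym : ∀ x : ℝ, gaussianPDFReal x v₂ y = gaussianPDFReal y v₂ x := by
      intro x
      simp only [gaussianPDFReal]
      rw [show (y - x) ^ 2 = (x - y) ^ 2 by ring]
    simp_rw [gaussianPDF, hsym, ← ENNReal.ofReal_mul (gaussianPDFReal_nonneg 0 v₁ _)]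
    rw [← ofReal_integral_eq_lintegral_ofReal (integrable_pdf_prod v₁ v₂ hv₁ hv₂ y)
      (ae_of_all _ fun x => mul_nonneg (gaussianPDFReal_nonneg _ _ _)
        (gaussianPDFReal_nonneg _ _ _)),
      integral_pdf_prod v₁ v₂ hv₁ hv₂ y]
  simp_rw [h2]
  rw [gaussianReal_of_var_ne_zero 0 hv, withDensity_apply _ hs]

lemma law_add {Ω : Type*} [MeasurableSpace Ω] (P : Measure Ω) [IsProbabilityMeasure P]
    {X Y : Ω → ℝ} (hX : Measurable X) (hY : Measurable Y) (h : IndepFun X Y P)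
    {v₁ v₂ : ℝ≥0} (hx : P.map X = gaussianReal 0 v₁) (hy : P.map Y = gaussianReal 0 v₂) :
    P.map (fun ω => X ω + Y ω) = gaussianReal 0 (v₁ + v₂) := by
  have hmap := (indepFun_iff_map_prod_eq_prod_map_map hX.aemeasurable hY.aemeasurable).mp h
  have hc : (fun ω => X ω + Y ω) = (fun p : ℝ × ℝ => p.1 + p.2) ∘ (fun ω => (X ω, Y ω)) := rfl
  rw [hc, ← Measure.map_map (by fun_prop) (hX.prodMk hY), hmap, hx, hy, map_add_prod_gaussian]

lemma gauss_Iic_half (v : ℝ≥0) (hv : v ≠ 0) :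
    ∫ x in Set.Iic (0:ℝ), gaussianPDFReal 0 v x = 1 / 2 := by
  have hint := integrable_gaussianPDFReal 0 v
  have htot := integral_gaussianPDFReal_eq_one 0 hv
  have hsplit : (∫ x in Set.Iic (0:ℝ), gaussianPDFReal 0 v x)
      + ∫ x in Set.Ioi (0:ℝ), gaussianPDFReal 0 v x = 1 := by
    have h := setIntegral_union (μ := volume) (f := gaussianPDFReal 0 v)
      (Set.Iic_disjoint_Ioi (le_refl (0:ℝ))) measurableSet_Ioi
      hint.integrableOn hint.integrableOn
    rw [Set.Iic_union_Ioi, setIntegral_univ, htot] at h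
    linarith
  have hsym : ∫ x in Set.Ioi (0:ℝ), gaussianPDFReal 0 v x
      = ∫ x in Set.Iic (0:ℝ), gaussianPDFReal 0 v x := by
    have h1 : ∫ x in Set.Ioi (0:ℝ), gaussianPDFReal 0 v x
        = ∫ x in Set.Ioi (0:ℝ), gaussianPDFReal 0 v (-x) := by
      congr 1
      ext x
      simp only [gaussianPDFReal]
      rw [show (-x - 0) ^ 2 = (x - 0) ^ 2 by ring]
    rw [h1, integral_comp_neg_Ioi, neg_zero]
  linarith

lemma gauss_tail (v : ℝ≥0) (hv : v ≠ 0) (c : ℝ) (hc : 0 ≤ c) :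
    gaussianReal 0 v (Set.Iic (-(Real.sqrt (2 * v) * c)))
      = ENNReal.ofReal (1 / 2 - (√π)⁻¹ * ∫ t in (0:ℝ)..c, rexp (-t ^ 2)) := by
  have hvpos : (0:ℝ) < v := by positivity
  set k : ℝ := Real.sqrt (2 * v) with hk
  have hkpos : 0 < k := Real.sqrt_pos.mpr (by positivity)
  have hint := integrable_gaussianPDFReal 0 v
  rw [gaussianReal_apply_eq_integral 0 hv]
  congr 1
  have hIic := intervalIntegral.integral_Iic_sub_Iic (f := gaussianPDFReal 0 v) (μ := volume)
    (a := -(k * c)) (b := 0) hint.integrableOn hint.integrableOn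
  have hsub : ∫ x in (-(k * c))..0, gaussianPDFReal 0 v x
      = (√π)⁻¹ * ∫ t in (0:ℝ)..c, rexp (-t ^ 2) := by
    have h2 := intervalIntegral.integral_comp_mul_left (a := -c) (b := 0)
      (fun x => gaussianPDFReal 0 v x) hkpos.ne'
    rw [mul_zero, mul_neg] at h2
    have h3 : ∀ t : ℝ, gaussianPDFReal 0 v (k * t) = (√(2 * π * v))⁻¹ * rexp (-t ^ 2) := by
      intro t
      simp only [gaussianPDFReal, sub_zero]
      congr 1
      rw [mul_pow, hk, Real.sq_sqrt (by positivity)]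
      field_simp
    simp_rw [h3] at h2
    rw [intervalIntegral.integral_const_mul] at h2
    have h4 : ∫ t in (-c)..(0:ℝ), rexp (-t ^ 2) = ∫ t in (0:ℝ)..c, rexp (-t ^ 2) := by
      have := intervalIntegral.integral_comp_neg (a := (0:ℝ)) (b := c)
        (fun t => rexp (-t ^ 2))
      simp only [neg_zero] at this
      rw [← this]
      congr 1
      ext t
      rw [show (-t) ^ 2 = t ^ 2 by ring]
    rw [h4] at h2
    have h5 : ∫ x in (-(k * c))..0, gaussianPDFReal 0 v x
        = k * ((√(2 * π * (v:ℝ)))⁻¹ * ∫ t in (0:ℝ)..c, rexp (-t ^ 2)) := by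
      rw [h2, smul_eq_mul, ← mul_assoc, mul_inv_cancel₀ hkpos.ne', one_mul]
    rw [h5, ← mul_assoc]
    congr 1
    rw [show 2 * π * (v:ℝ) = π * (2 * v) by ring, Real.sqrt_mul pi_pos.le, ← hk]
    field_simp
  rw [hsub, gauss_Iic_half v hv] at hIic
  linarith

open scoped RealInnerProductSpace in
lemma geom_cone {E : Type*} [NormedAddCommGroup E] [InnerProductSpace ℝ E]
    [Fact (Module.finrank ℝ E = 2)] (o : Orientation ℝ E (Fin 2))
    (u v : E) (r t : ℝ) (hr : 0 ≤ r) (hru : r < ‖u‖) (ht : 0 ≤ t)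
    (hcol : ‖u - t • v‖ ≤ r) :
    ⟪o.rotation ((-(Real.arcsin (r / ‖u‖) + π / 2) : ℝ) : Real.Angle) u, v⟫ ≤ 0 := by
  set d : ℝ := ‖u‖ with hd
  have hdpos : 0 < d := lt_of_le_of_lt hr hru
  have htpos : 0 < t := by
    rcases ht.lt_or_eq with h | h
    · exact h
    · exfalso
      rw [← h, zero_smul, sub_zero] at hcol
      exact absurd hcol (not_le.mpr hru)
  set P : ℝ := ⟪u, v⟫ with hP
  set W : ℝ := o.areaForm u v with hW
  have key1 : d ^ 2 - 2 * (t * P) + t ^ 2 * ‖v‖ ^ 2 ≤ r ^ 2 := by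
    have h1 : ‖u - t • v‖ ^ 2 ≤ r ^ 2 := by
      apply pow_le_pow_left₀ (norm_nonneg _) hcol
    rw [norm_sub_sq_real, real_inner_smul_right, norm_smul, Real.norm_eq_abs,
      abs_of_nonneg ht, mul_pow] at h1
    calc d ^ 2 - 2 * (t * P) + t ^ 2 * ‖v‖ ^ 2 = ‖u‖ ^ 2 - 2 * (t * P) + t ^ 2 * ‖v‖ ^ 2 := rfl
    _ ≤ r ^ 2 := h1
  set s : ℝ := Real.sqrt (d ^ 2 - r ^ 2) with hs
  have hs0 : 0 ≤ s := Real.sqrt_nonneg _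
  have hs2 : s ^ 2 = d ^ 2 - r ^ 2 := Real.sq_sqrt (by nlinarith)
  have key2 : ‖v‖ * s ≤ P := by
    nlinarith [sq_nonneg (t * ‖v‖ - s), mul_pos htpos htpos]
  have hP0 : 0 ≤ P := le_trans (by positivity) key2
  have hrd1 : r / d ≤ 1 := by
    rw [div_le_one hdpos]; exact hru.le
  have hrd0 : 0 ≤ r / d := by positivity
  -- expand the rotation
  rw [Orientation.rotation_apply, inner_add_left, real_inner_smul_left, real_inner_smul_left,
    Real.Angle.cos_coe, Real.Angle.sin_coe, Orientation.inner_rightAngleRotation_left]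
  rw [Real.cos_neg, Real.sin_neg, Real.cos_add_pi_div_two, Real.sin_add_pi_div_two,
    Real.sin_arcsin (by linarith) hrd1, Real.cos_arcsin]
  set c₀ : ℝ := Real.sqrt (1 - (r / d) ^ 2) with hc₀
  have hc00 : 0 ≤ c₀ := Real.sqrt_nonneg _
  have hc02 : c₀ ^ 2 = 1 - (r / d) ^ 2 := Real.sq_sqrt (by nlinarith [div_le_one_of_le₀ hru.le hdpos.le, sq_nonneg (r/d)])
  rw [← hP, ← hW]
  -- goal should now be - (r/d) * P + - c₀ * W ≤ 0
  have hident : P ^ 2 + W ^ 2 = d ^ 2 * ‖v‖ ^ 2 := by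
    have := o.inner_sq_add_areaForm_sq u v
    rw [← hP, ← hW, ← hd] at this
    exact this
  have hgoal : 0 ≤ r / d * P + c₀ * W := by
    rcases le_or_gt 0 W with hW0 | hW0
    · positivity
    · have hP2 : (d ^ 2 - r ^ 2) * ‖v‖ ^ 2 ≤ P ^ 2 := by
        have e := pow_le_pow_left₀ (mul_nonneg (norm_nonneg v) hs0) key2 2
        rw [mul_pow, hs2] at e
        nlinarith [e]
      have hq2 : (r / d) ^ 2 * d ^ 2 = r ^ 2 := by field_simp
      have hsq : (c₀ * (-W)) ^ 2 ≤ (r / d * P) ^ 2 := by nlinarith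
      have h := Real.sqrt_le_sqrt hsq
      rw [Real.sqrt_sq (mul_nonneg hc00 (neg_nonneg.mpr hW0.le)),
        Real.sqrt_sq (mul_nonneg hrd0 hP0)] at h
      linarith
  linarith [hgoal]

lemma inner_expand (N x : EuclideanSpace ℝ (Fin 2)) :
    (inner ℝ N x : ℝ) = N 0 * x 0 + N 1 * x 1 := by
  simp [PiLp.inner_apply, Fin.sum_univ_two, mul_comm]

/-- The transformed deterministic chance constraint of the paper guarantees that the collision
probability stays below the threshold `φ`: if the first disk's velocity is Gaussian with mean
`(v̂₁, v̂₂)` and independent component noises of variances `w₁, w₂`, `N` is an outer normal of the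
collision cone, and `⟪N, v̂⟫ - ⟪N, v_j⟫ ≥ √(2 (N₁² w₁ + N₂² w₂)) · erf⁻¹(1 - 2φ)`, then the
probability that the disks ever collide is at most `φ`. -/
theorem stmt15 {Ω : Type*} [MeasurableSpace Ω] (P : Measure Ω) [IsProbabilityMeasure P]
    (p_i p_j : EuclideanSpace ℝ (Fin 2)) (r_i r_j : ℝ) (hri : 0 ≤ r_i) (hrj : 0 ≤ r_j)
    (r : ℝ) (hr : r = r_i + r_j) (d : ℝ) (hd : d = ‖p_j - p_i‖) (hdr : r < d)
    (α : ℝ) (hα : α = Real.arcsin (r / d))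
    (N : EuclideanSpace ℝ (Fin 2))
    (hN : N = stdOrientation.rotation ((-(α + π / 2) : ℝ) : Real.Angle) (p_j - p_i))
    (v_j : EuclideanSpace ℝ (Fin 2)) (vhat₁ vhat₂ : ℝ)
    (W₁ W₂ : Ω → ℝ) (hW₁m : Measurable W₁) (hW₂m : Measurable W₂)
    (hindep : IndepFun W₁ W₂ P) (w₁ w₂ : ℝ≥0) (hw₁ : 0 < w₁) (hw₂ : 0 < w₂)
    (hW₁ : P.map W₁ = gaussianReal 0 w₁) (hW₂ : P.map W₂ = gaussianReal 0 w₂)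
    (v_i : Ω → EuclideanSpace ℝ (Fin 2))
    (hv_i : ∀ ω, v_i ω = (WithLp.equiv 2 (Fin 2 → ℝ)).symm ![vhat₁ + W₁ ω, vhat₂ + W₂ ω])
    (φ c : ℝ) (hφ : φ ∈ Set.Ioo (0 : ℝ) (1 / 2)) (hc : 0 ≤ c)
    (herf : (2 / Real.sqrt π) * ∫ t in (0 : ℝ)..c, Real.exp (-t ^ 2) = 1 - 2 * φ)
    (hdet : (inner ℝ N ((WithLp.equiv 2 (Fin 2 → ℝ)).symm ![vhat₁, vhat₂]) : ℝ) -
        (inner ℝ N v_j : ℝ) ≥ Real.sqrt (2 * ((N 0) ^ 2 * w₁ + (N 1) ^ 2 * w₂)) * c) :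
    P {ω | ∃ t : ℝ, 0 ≤ t ∧ dist (p_i + t • v_i ω) (p_j + t • v_j) ≤ r} ≤
      ENNReal.ofReal φ := by
  have hr0 : 0 ≤ r := by rw [hr]; linarith
  have hd0 : 0 < d := lt_of_le_of_lt hr0 hdr
  set c₁ : ℝ := N 0 with hc₁
  set c₂ : ℝ := N 1 with hc₂
  have hlaw1 : P.map (fun ω => c₁ * W₁ ω) = gaussianReal 0 (⟨c₁ ^ 2, sq_nonneg _⟩ * w₁) := by
    have hcomp : (fun ω => c₁ * W₁ ω) = (fun x => c₁ * x) ∘ W₁ := rfl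
    rw [hcomp, ← Measure.map_map (measurable_const_mul c₁) hW₁m, hW₁,
      gaussianReal_map_const_mul, mul_zero]
    rfl
  have hlaw2 : P.map (fun ω => c₂ * W₂ ω) = gaussianReal 0 (⟨c₂ ^ 2, sq_nonneg _⟩ * w₂) := by
    have hcomp : (fun ω => c₂ * W₂ ω) = (fun x => c₂ * x) ∘ W₂ := rfl
    rw [hcomp, ← Measure.map_map (measurable_const_mul c₂) hW₂m, hW₂,
      gaussianReal_map_const_mul, mul_zero]
    rfl
  set V : ℝ≥0 := ⟨c₁ ^ 2, sq_nonneg _⟩ * w₁ + ⟨c₂ ^ 2, sq_nonneg _⟩ * w₂ with hV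
  have hlawZ : P.map (fun ω => c₁ * W₁ ω + c₂ * W₂ ω) = gaussianReal 0 V :=
    law_add P (hW₁m.const_mul c₁) (hW₂m.const_mul c₂)
      (hindep.comp (measurable_const_mul c₁) (measurable_const_mul c₂)) hlaw1 hlaw2
  have hVr : (V : ℝ) = c₁ ^ 2 * w₁ + c₂ ^ 2 * w₂ := by
    rw [hV]
    push_cast
    rfl
  have hNnorm : ‖N‖ = d := by rw [hN, LinearIsometryEquiv.norm_map, ← hd]
  have hNne : c₁ ≠ 0 ∨ c₂ ≠ 0 := by
    by_contra h
    push_neg at h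
    have hzero : N = 0 := by
      ext i
      fin_cases i
      · exact h.1
      · exact h.2
    rw [hzero, norm_zero] at hNnorm
    exact hd0.ne hNnorm
  have hVpos : 0 < (V : ℝ) := by
    rw [hVr]
    rcases hNne with h | h
    · have h1 : 0 < c₁ ^ 2 * (w₁ : ℝ) := mul_pos (by positivity) (by exact_mod_cast hw₁)
      nlinarith [mul_nonneg (sq_nonneg c₂) (w₂.coe_nonneg)]
    · have h1 : 0 < c₂ ^ 2 * (w₂ : ℝ) := mul_pos (by positivity) (by exact_mod_cast hw₂)
      nlinarith [mul_nonneg (sq_nonneg c₁) (w₁.coe_nonneg)]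
  have hVne : V ≠ 0 := by
    intro h
    rw [h] at hVpos
    simp at hVpos
  set m : ℝ := (inner ℝ N ((WithLp.equiv 2 (Fin 2 → ℝ)).symm ![vhat₁, vhat₂]) : ℝ) -
      (inner ℝ N v_j : ℝ) with hm
  have hsub : {ω | ∃ t : ℝ, 0 ≤ t ∧ dist (p_i + t • v_i ω) (p_j + t • v_j) ≤ r}
      ⊆ (fun ω => c₁ * W₁ ω + c₂ * W₂ ω) ⁻¹' Set.Iic (-m) := by
    rintro ω ⟨t, ht, hcol⟩
    have hdist : dist (p_i + t • v_i ω) (p_j + t • v_j)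
        = ‖(p_j - p_i) - t • (v_i ω - v_j)‖ := by
      rw [dist_eq_norm, ← norm_neg]
      congr 1
      rw [smul_sub]
      abel
    have hcone := geom_cone stdOrientation (p_j - p_i) (v_i ω - v_j) r t hr0
      (by rw [← hd]; exact hdr) ht (by rw [← hdist]; exact hcol)
    rw [← hd, ← hα, ← hN, inner_sub_right] at hcone
    have hexp : (inner ℝ N (v_i ω) : ℝ)
        = (inner ℝ N ((WithLp.equiv 2 (Fin 2 → ℝ)).symm ![vhat₁, vhat₂]) : ℝ)
          + (c₁ * W₁ ω + c₂ * W₂ ω) := by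
      rw [hv_i ω, inner_expand, inner_expand]
      simp only [WithLp.equiv_symm_apply, PiLp.toLp_apply, Matrix.cons_val_zero, Matrix.cons_val_one,
        Matrix.head_cons]
      ring
    simp only [Set.mem_preimage, Set.mem_Iic]
    rw [hexp] at hcone
    linarith [hcone]
  have hmle : Real.sqrt (2 * (V : ℝ)) * c ≤ m := by
    rw [hVr]
    exact hdet
  have hmono : Set.Iic (-m) ⊆ Set.Iic (-(Real.sqrt (2 * (V : ℝ)) * c)) :=
    Set.Iic_subset_Iic.mpr (by linarith)
  calc P {ω | ∃ t : ℝ, 0 ≤ t ∧ dist (p_i + t • v_i ω) (p_j + t • v_j) ≤ r}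
      ≤ P ((fun ω => c₁ * W₁ ω + c₂ * W₂ ω) ⁻¹' Set.Iic (-m)) := measure_mono hsub
    _ = (P.map (fun ω => c₁ * W₁ ω + c₂ * W₂ ω)) (Set.Iic (-m)) :=
        (Measure.map_apply ((hW₁m.const_mul c₁).add (hW₂m.const_mul c₂))
          measurableSet_Iic).symm
    _ = gaussianReal 0 V (Set.Iic (-m)) := by rw [hlawZ]
    _ ≤ gaussianReal 0 V (Set.Iic (-(Real.sqrt (2 * (V : ℝ)) * c))) := measure_mono hmono
    _ = ENNReal.ofReal (1 / 2 - (√π)⁻¹ * ∫ t in (0:ℝ)..c, rexp (-t ^ 2)) :=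
        gauss_tail V hVne c hc
    _ = ENNReal.ofReal φ := by
        congr 1
        have hπ : 0 < Real.sqrt π := Real.sqrt_pos.mpr pi_pos
        have heq : (√π)⁻¹ * ∫ t in (0:ℝ)..c, rexp (-t ^ 2) = (1 - 2 * φ) / 2 := by
          rw [div_mul_eq_mul_div, mul_comm] at herf
          rw [inv_mul_eq_div]
          rw [div_eq_iff hπ.ne'] at herf ⊢
          linarith
        rw [heq]
        ring


end
end
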